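/- arXiv:1202.0800 — 11 statements merged into one kernel-verified Lean document; each statement's English description precedes it below -/
import Mathlib

section
/- Let q be a prime power, F_q ⊆ F_{q^N}, and let f(x) = ∑_{i=0}^{K−1} a_i x^{q^i} be a linearized polynomial over F_{q^N} with K ≤ N. If there exist elements g_1, …, g_K ∈ F_{q^N} that are linearly independent over F_q such that f(g_j) = 0 for all j = 1, …, K, then all coefficients of f are zero: a_0 = a_1 = ⋯ = a_{K−1} = 0. -/
/-- A linearized polynomial `f(x) = ∑_{i=0}^{K-1} a_i x^{q^i}` over `F_{q^N}`
(with `K ≤ N`) vanishing on `K` points of `F_{q^N}` that are linearly independent over `F_q`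
must have all coefficients zero. -/
theorem linearized_polynomial_vanishing_on_independent_points
    (q N K : ℕ) (hq : ∃ p e : ℕ, p.Prime ∧ 0 < e ∧ q = p ^ e) (hKN : K ≤ N)
    (Fq FqN : Type) [Field Fq] [Field FqN] [Algebra Fq FqN]
    [Fintype Fq] [Fintype FqN]
    (hcard : Fintype.card Fq = q) (hcardN : Fintype.card FqN = q ^ N)
    (a : Fin K → FqN)
    (f : FqN → FqN) (hf : ∀ x, f x = ∑ i : Fin K, a i * x ^ q ^ (i : ℕ))
    (g : Fin K → FqN) (hg : LinearIndependent Fq g)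
    (hz : ∀ j : Fin K, f (g j) = 0) :
    ∀ i : Fin K, a i = 0 := by
  classical
  obtain ⟨p, e, hp, he, rfl⟩ := hq
  -- trivial case K = 0
  rcases Nat.eq_zero_or_pos K with hK0 | hK0
  · subst hK0; exact fun i => absurd i.2 (by omega)
  have hN : 0 < N := lt_of_lt_of_le hK0 hKN
  have hq1 : 1 < p ^ e := Nat.one_lt_pow (by omega) hp.one_lt
  -- characteristic of FqN is p
  have hpFqN : CharP FqN p := by
    have h1 := CharP.char_is_prime FqN (ringChar FqN)
    obtain ⟨n, hn⟩ := FiniteField.card FqN (ringChar FqN)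
    rw [hcardN, ← pow_mul] at hn
    have hdvd : p ∣ ringChar FqN ^ (n : ℕ) := by
      rw [← hn.2]
      exact dvd_pow_self p (by positivity)
    have : p = ringChar FqN := by
      have := hp.dvd_of_dvd_pow hdvd
      exact ((Nat.prime_dvd_prime_iff_eq hp h1).mp this)
    rw [this]
    exact ringChar.charP FqN
  haveI := hpFqN
  haveI := Fact.mk hp
  haveI : ExpChar FqN p := .prime hp
  -- f is Fq-linear
  have hadd : ∀ x y : FqN, f (x + y) = f x + f y := by
    intro x y
    simp only [hf, ← Finset.sum_add_distrib]
    refine Finset.sum_congr rfl fun i _ => ?_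
    rw [← mul_add, ← pow_mul, add_pow_char_pow, pow_mul]
  have hsmul : ∀ (c : Fq) (x : FqN), f (c • x) = c • f x := by
    intro c x
    simp only [hf, Algebra.smul_def, Finset.mul_sum]
    refine Finset.sum_congr rfl fun i _ => ?_
    rw [mul_pow, ← map_pow]
    have : c ^ (p ^ e) ^ (i : ℕ) = c := by
      rw [← hcard]; exact FiniteField.pow_card_pow _ _
    rw [this]; ring
  -- f vanishes on the span of g
  have hspan : ∀ x ∈ Submodule.span Fq (Set.range g), f x = 0 := by
    intro x hx
    induction hx using Submodule.span_induction with
    | mem x hx => obtain ⟨j, rfl⟩ := hx; exact hz j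
    | zero =>
        have := hsmul 0 0
        simpa using this
    | add x y _ _ hx hy => rw [hadd, hx, hy, add_zero]
    | smul c x _ hx => rw [hsmul, hx, smul_zero]
  -- the polynomial
  set P : Polynomial FqN := ∑ i : Fin K, Polynomial.C (a i) * Polynomial.X ^ (p ^ e) ^ (i : ℕ)
    with hP
  have hPeval : ∀ x : FqN, P.eval x = f x := by
    intro x
    rw [hf, hP, Polynomial.eval_finset_sum]
    simp
  -- degree bound
  have hdeg : P.natDegree < (p ^ e) ^ K := by
    have : P.natDegree ≤ (p ^ e) ^ (K - 1) := by
      refine Polynomial.natDegree_sum_le_of_forall_le _ _ fun i _ => ?_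
      refine le_trans (Polynomial.natDegree_C_mul_le _ _) ?_
      refine le_trans (Polynomial.natDegree_X_pow_le _) ?_
      exact Nat.pow_le_pow_right (by positivity) (by omega)
    exact lt_of_le_of_lt this (Nat.pow_lt_pow_right hq1 (by omega))
  -- the span has (p^e)^K elements
  haveI : FiniteDimensional Fq FqN := Module.Finite.of_basis
    (Module.finBasis Fq FqN)
  set S := Submodule.span Fq (Set.range g) with hS
  have hfinrank : Module.finrank Fq S = K := by
    rw [hS, finrank_span_eq_card hg, Fintype.card_fin]
  have hcardS : Fintype.card S = (p ^ e) ^ K := by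
    rw [Module.card_eq_pow_finrank (K := Fq) (V := S), hcard, hfinrank]
  -- P has too many roots, hence P = 0
  have hP0 : P = 0 := by
    refine Polynomial.eq_zero_of_natDegree_lt_card_of_eval_eq_zero P
      (f := fun s : S => (s : FqN)) Subtype.val_injective
      (fun s => ?_) (by rw [hcardS]; exact hdeg)
    rw [hPeval]
    exact hspan _ s.2
  -- extract coefficients
  intro i
  have hcoeff : P.coeff ((p ^ e) ^ (i : ℕ)) = a i := by
    rw [hP, Polynomial.finset_sum_coeff]
    have hinj : Function.Injective fun j : Fin K => (p ^ e) ^ (j : ℕ) := by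
      intro j₁ j₂ h
      exact Fin.ext (Nat.pow_right_injective hq1 h)
    rw [Finset.sum_eq_single i]
    · simp
    · intro j _ hji
      rw [Polynomial.coeff_C_mul, Polynomial.coeff_X_pow, if_neg, mul_zero]
      exact fun h => hji (hinj h.symm)
    · intro h; exact absurd (Finset.mem_univ i) h
  rw [← hcoeff, hP0, Polynomial.coeff_zero]
end

section
/- Let q be a prime power, F_q ⊆ F_{q^N}, let K ≤ m ≤ N, let g_1, …, g_m ∈ F_{q^N} be linearly independent over F_q, and let f(x) = ∑_{i=0}^{K−1} a_i x^{q^i} be a linearized polynomial with not all coefficients zero. Then the rank weight of the codeword (f(g_1), …, f(g_m)) is at least m − K + 1; that is, the dimension over F_q of the F_q-linear span of {f(g_1), …, f(g_m)} in F_{q^N} is at least m − K + 1. Consequently the Gabidulin code has minimum rank distance m − K + 1 and is a maximum rank distance (MRD) code. -/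
/-- Every nonzero Gabidulin codeword `(f(g_1), …, f(g_m))`, where
`f(x) = ∑_{i<K} a_i x^{q^i}` is a nonzero linearized polynomial and `g_1, …, g_m ∈ F_{q^N}`
are `F_q`-linearly independent, has rank weight (the `F_q`-dimension of the `F_q`-span of its
coordinates) at least `m - K + 1`; hence the Gabidulin code is MRD with minimum rank
distance `m - K + 1`. -/
theorem gabidulin_code_is_MRD
    (q N K m : ℕ) (hq : ∃ p e : ℕ, p.Prime ∧ 0 < e ∧ q = p ^ e)
    (hKm : K ≤ m) (hmN : m ≤ N)
    (Fq FqN : Type) [Field Fq] [Field FqN] [Algebra Fq FqN]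
    [Fintype Fq] [Fintype FqN]
    (hcard : Fintype.card Fq = q) (hcardN : Fintype.card FqN = q ^ N)
    (g : Fin m → FqN) (hg : LinearIndependent Fq g)
    (a : Fin K → FqN) (ha : a ≠ 0) :
    m - K + 1 ≤
      Module.finrank Fq
        ↥(Submodule.span Fq
          (Set.range fun j : Fin m => ∑ i : Fin K, a i * g j ^ q ^ (i : ℕ))) := by
  classical
  obtain ⟨p, e, hp, he, hqe⟩ := hq
  have hq2 : 2 ≤ q := by
    have := hp.two_le
    calc 2 ≤ p := this
    _ ≤ p ^ e := Nat.le_self_pow he.ne' p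
    _ = q := hqe.symm
  have hK : 0 < K := by
    rcases Nat.eq_zero_or_pos K with h | h
    · subst h; exact absurd (Subsingleton.elim a 0) ha
    · exact h
  have hm : 0 < m := lt_of_lt_of_le hK hKm
  have hN : 0 < N := lt_of_lt_of_le hm hmN
  -- characteristic of FqN is p
  have hr : ringChar FqN = p := by
    haveI : Fact (ringChar FqN).Prime := ⟨CharP.char_is_prime FqN _⟩
    obtain ⟨n, -, hcn⟩ := FiniteField.card FqN (ringChar FqN)
    have h2 : p ^ (e * N) = ringChar FqN ^ (n : ℕ) := by
      rw [pow_mul, ← hqe, ← hcardN, hcn]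
    have : ringChar FqN ∣ p ^ (e * N) := by
      rw [h2]; exact dvd_pow_self _ n.ne_zero
    have := (Nat.Prime.dvd_of_dvd_pow (Fact.out) this)
    exact ((Nat.prime_dvd_prime_iff_eq Fact.out hp).mp this)
  haveI hchar : CharP FqN p := hr ▸ ringChar.charP FqN
  haveI : Fact p.Prime := ⟨hp⟩
  -- pow q^i is additive
  have hadd : ∀ (i : ℕ) (x y : FqN), (x + y) ^ q ^ i = x ^ q ^ i + y ^ q ^ i := by
    intro i x y
    rw [hqe, ← pow_mul]
    exact add_pow_char_pow x y p (e * i)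
  -- scalars are fixed by pow q^i
  have hsc : ∀ (i : ℕ) (c : Fq), (algebraMap Fq FqN c) ^ q ^ i = algebraMap Fq FqN c := by
    intro i c
    rw [← map_pow]
    congr 1
    rw [← hcard]
    exact FiniteField.pow_card_pow i c
  -- the linearized polynomial as an Fq-linear map
  set φ : FqN →ₗ[Fq] FqN :=
    { toFun := fun x => ∑ i : Fin K, a i * x ^ q ^ (i : ℕ)
      map_add' := by
        intro x y
        rw [← Finset.sum_add_distrib]
        refine Finset.sum_congr rfl fun i _ => ?_
        rw [hadd, mul_add]
      map_smul' := by
        intro c x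
        simp only [RingHom.id_apply]
        show ∑ i : Fin K, a i * (c • x) ^ q ^ (i : ℕ) =
          c • ∑ i : Fin K, a i * x ^ q ^ (i : ℕ)
        rw [Finset.smul_sum]
        refine Finset.sum_congr rfl fun i _ => ?_
        rw [Algebra.smul_def, Algebra.smul_def, mul_pow, hsc, ← mul_assoc, ← mul_assoc,
          mul_comm (a i) (algebraMap Fq FqN c)] } with hφ
  -- kernel of φ has dimension ≤ K - 1
  have hker : Module.finrank Fq (LinearMap.ker φ) ≤ K - 1 := by
    -- the polynomial
    set P : Polynomial FqN := ∑ i : Fin K, Polynomial.C (a i) * Polynomial.X ^ q ^ (i : ℕ)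
      with hP
    have hPne : P ≠ 0 := by
      obtain ⟨i0, hi0⟩ : ∃ i, a i ≠ 0 := by
        by_contra h
        push_neg at h
        exact ha (funext h)
      intro h
      apply hi0
      have := congrArg (Polynomial.coeff · (q ^ (i0 : ℕ))) h
      simp only [hP, Polynomial.finset_sum_coeff, Polynomial.coeff_C_mul,
        Polynomial.coeff_X_pow, Polynomial.coeff_zero] at this
      rw [Finset.sum_eq_single i0] at this
      · simpa using this
      · intro b _ hb
        have hne : q ^ (i0 : ℕ) ≠ q ^ (b : ℕ) := by
          intro hqq
          exact hb (Fin.ext ((Nat.pow_right_injective hq2) hqq).symm)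
        simp [hne]
      · simp
    have hPdeg : P.natDegree ≤ q ^ (K - 1) := by
      refine Polynomial.natDegree_sum_le_of_forall_le _ _ fun i _ => ?_
      calc (Polynomial.C (a i) * Polynomial.X ^ q ^ (i : ℕ)).natDegree
          ≤ (Polynomial.X ^ q ^ (i : ℕ) : Polynomial FqN).natDegree :=
            Polynomial.natDegree_C_mul_le _ _
        _ = q ^ (i : ℕ) := Polynomial.natDegree_X_pow _
        _ ≤ q ^ (K - 1) := Nat.pow_le_pow_right (by omega) (by omega)
    -- kernel elements are roots of P
    have hroot : ∀ x : FqN, x ∈ LinearMap.ker φ → P.IsRoot x := by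
      intro x hx
      have hx' : ∑ i : Fin K, a i * x ^ q ^ (i : ℕ) = 0 := hx
      simp only [Polynomial.IsRoot, hP, Polynomial.eval_finset_sum, Polynomial.eval_mul,
        Polynomial.eval_C, Polynomial.eval_pow, Polynomial.eval_X]
      exact hx'
    have hcardker : Fintype.card (LinearMap.ker φ) ≤ q ^ (K - 1) := by
      have hinj : Function.Injective
          (fun x : LinearMap.ker φ => (⟨(x : FqN), by
            rw [Multiset.mem_toFinset, Polynomial.mem_roots hPne]
            exact hroot x x.2⟩ : P.roots.toFinset)) := by
        intro x y hxy
        have h4 := congrArg (Subtype.val (p := fun z => z ∈ P.roots.toFinset)) hxy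
        exact Subtype.ext h4
      calc Fintype.card (LinearMap.ker φ) ≤ Fintype.card P.roots.toFinset :=
            Fintype.card_le_of_injective _ hinj
        _ = P.roots.toFinset.card := Fintype.card_coe _
        _ ≤ Multiset.card P.roots := Multiset.toFinset_card_le _
        _ ≤ P.natDegree := Polynomial.card_roots' P
        _ ≤ q ^ (K - 1) := hPdeg
    have hcard' : Fintype.card (LinearMap.ker φ) =
        q ^ Module.finrank Fq (LinearMap.ker φ) := by
      rw [← hcard]; exact Module.card_eq_pow_finrank
    rw [hcard'] at hcardker
    exact (Nat.pow_le_pow_iff_right hq2).mp hcardker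
  -- rank-nullity on the restriction of φ to the span of g
  set V : Submodule Fq FqN := Submodule.span Fq (Set.range g) with hV
  have hVrank : Module.finrank Fq V = m := by
    rw [hV, finrank_span_eq_card hg, Fintype.card_fin]
  have hspan : Submodule.span Fq
      (Set.range fun j : Fin m => ∑ i : Fin K, a i * g j ^ q ^ (i : ℕ)) =
      Submodule.map φ V := by
    rw [hV, Submodule.map_span, ← Set.range_comp]
    rfl
  rw [hspan]
  have hrn := LinearMap.finrank_range_add_finrank_ker (φ.domRestrict V)
  rw [LinearMap.range_domRestrict] at hrn
  have hkerle : Module.finrank Fq (LinearMap.ker (φ.domRestrict V)) ≤ K - 1 := by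
    refine le_trans ?_ hker
    have hinj : Function.Injective
        (fun x : LinearMap.ker (φ.domRestrict V) =>
          (⟨((x : V) : FqN), x.2⟩ : LinearMap.ker φ)) := by
      intro x y hxy
      have h3 : ((x : V) : FqN) = ((y : V) : FqN) :=
        congrArg (Subtype.val (p := fun z => z ∈ LinearMap.ker φ)) hxy
      exact Subtype.ext (Subtype.ext h3)
    exact LinearMap.finrank_le_finrank_of_injective
      (f := { toFun := fun x : LinearMap.ker (φ.domRestrict V) =>
                (⟨((x : V) : FqN), x.2⟩ : LinearMap.ker φ)
              map_add' := fun x y => rfl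
              map_smul' := fun c x => rfl }) hinj
  rw [hVrank] at hrn
  omega
end

section
/- Let q be a prime power, let 1 ≤ δ ≤ m ≤ N, and let C be an F_q-linear subspace of the space of N × m matrices over F_q such that every nonzero matrix in C has rank at least δ. Then dim_{F_q} C ≤ N(m − δ + 1). -/
set_option maxHeartbeats 1000000


/-- Singleton bound for the rank metric. If `C` is an `F_q`-linear subspace
of `N × m` matrices over `F_q` (with `1 ≤ δ ≤ m ≤ N`) in which every nonzero matrix has
rank at least `δ`, then `dim_{F_q} C ≤ N (m - δ + 1)`. -/
theorem rank_metric_singleton_bound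
    (q : ℕ) (hq : ∃ p e : ℕ, p.Prime ∧ 0 < e ∧ q = p ^ e)
    (Fq : Type) [Field Fq] [Fintype Fq] (hcard : Fintype.card Fq = q)
    (N m δ : ℕ) (hδ1 : 1 ≤ δ) (hδm : δ ≤ m) (hmN : m ≤ N)
    (C : Submodule Fq (Matrix (Fin N) (Fin m) Fq))
    (hC : ∀ A ∈ C, A ≠ 0 → δ ≤ A.rank) :
    Module.finrank Fq ↥C ≤ N * (m - δ + 1) := by
  classical
  set r := m - δ + 1 with hr
  have hrm : r ≤ m := by omega
  let f : Fin r → Fin m := fun j => ⟨j, by omega⟩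
  let L : Matrix (Fin N) (Fin m) Fq →ₗ[Fq] Matrix (Fin N) (Fin r) Fq :=
    { toFun := fun A => A.submatrix id f
      map_add' := by intros; ext i j; simp [Matrix.submatrix]
      map_smul' := by intros; ext i j; simp [Matrix.submatrix] }
  have hinj : Function.Injective (L.comp C.subtype) := by
    rw [← LinearMap.ker_eq_bot, LinearMap.ker_eq_bot']
    rintro ⟨A, hA⟩ hLA
    have hLA' : A.submatrix id f = 0 := hLA
    have hcol : ∀ (j : ℕ) (hj : j < r) (i : Fin N), A i ⟨j, by omega⟩ = 0 := by
      intro j hj i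
      have := congrFun (congrFun hLA' i) ⟨j, hj⟩
      simpa [Matrix.submatrix, f] using this
    ext1
    by_contra hA0
    have hA0' : A ≠ 0 := by simpa using hA0
    have hrank : δ ≤ A.rank := hC A hA hA0'
    have hrank' : A.rank ≤ δ - 1 := by
      rw [Matrix.rank_eq_finrank_span_cols]
      let g : Fin (δ - 1) → (Fin N → Fq) := fun j => A.transpose ⟨r + (j : ℕ), by omega⟩
      have hsub : Set.range A.transpose ⊆
          (Submodule.span Fq (Set.range g) : Set (Fin N → Fq)) := by
        rintro _ ⟨j, rfl⟩
        by_cases hj : (j : ℕ) < r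
        · have hz : A.transpose j = 0 := by
            funext i
            exact hcol j hj i
          rw [hz]; exact (Submodule.span Fq _).zero_mem
        · apply Submodule.subset_span
          have hjδ : (j : ℕ) - r < δ - 1 := by omega
          have hje : (⟨r + ((j : ℕ) - r), by omega⟩ : Fin m) = j := by
            apply Fin.ext
            simp only [Fin.val_mk]
            omega
          exact ⟨⟨(j : ℕ) - r, hjδ⟩, by show A.transpose _ = A.transpose j; rw [hje]⟩
      calc Module.finrank Fq (Submodule.span Fq (Set.range A.transpose))
          ≤ Module.finrank Fq (Submodule.span Fq (Set.range g)) :=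
            Submodule.finrank_mono (Submodule.span_le.2 hsub)
        _ ≤ Fintype.card (Fin (δ - 1)) := finrank_range_le_card g
        _ = δ - 1 := by simp
    have := hrank.trans hrank'
    omega
  calc Module.finrank Fq ↥C ≤ Module.finrank Fq (Matrix (Fin N) (Fin r) Fq) :=
        LinearMap.finrank_le_finrank_of_injective hinj
    _ = N * r := by simp [Module.finrank_matrix]
end

section
/- Let q be a prime power, F_q ⊆ F_{q^N}, and let C ⊆ (F_{q^N})^m be a set such that any two distinct elements of C are at rank distance at least δ. Let V ⊆ F_q^m be an F_q-subspace of dimension s, and let t be a nonnegative integer with 2t + s ≤ δ − 1. Then for every received word r ∈ (F_{q^N})^m there is at most one codeword c ∈ C for which r − c can be written as x + y where wt_R(x) ≤ t and y lies in the F_{q^N}-linear span of V inside (F_{q^N})^m. That is, a code of minimum rank distance δ can simultaneously correct a rank error of rank t and a rank erasure of rank s whenever 2t + s ≤ δ − 1. -/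
/-- The rank weight of a vector `x ∈ (F_{q^N})^m`: the dimension over `F_q` of the
`F_q`-linear span in `F_{q^N}` of the coordinates of `x`. -/
noncomputable def rankWeight (Fq : Type) [Field Fq] {FqN : Type} [Field FqN]
    [Algebra Fq FqN] {ι : Type} (x : ι → FqN) : ℕ :=
  Module.finrank Fq ↥(Submodule.span Fq (Set.range x))

section Aux

variable {Fq FqN : Type} [Field Fq] [Field FqN] [Algebra Fq FqN] {ι : Type}

lemma rankWeight_neg (x : ι → FqN) : rankWeight Fq (-x) = rankWeight Fq x := by
  have h : Submodule.span Fq (Set.range (-x)) = Submodule.span Fq (Set.range x) := by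
    have h1 : Set.range (-x) = -(Set.range x) := by
      have : -x = Neg.neg ∘ x := rfl
      rw [this, Set.range_comp, Set.image_neg_eq_neg]
    rw [h1, Submodule.span_neg]
  unfold rankWeight
  rw [h]

lemma rankWeight_add_le [Fintype FqN] (a b : ι → FqN) :
    rankWeight Fq (a + b) ≤ rankWeight Fq a + rankWeight Fq b := by
  have : FiniteDimensional Fq FqN := Module.Finite.of_finite
  have hle : Submodule.span Fq (Set.range (a + b)) ≤
      Submodule.span Fq (Set.range a) ⊔ Submodule.span Fq (Set.range b) := by
    rw [Submodule.span_le]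
    rintro z ⟨j, rfl⟩
    exact Submodule.add_mem _
      (Submodule.mem_sup_left (Submodule.subset_span ⟨j, rfl⟩))
      (Submodule.mem_sup_right (Submodule.subset_span ⟨j, rfl⟩))
  exact le_trans (Submodule.finrank_mono hle)
    (Submodule.finrank_add_le_finrank_add_finrank _ _)

lemma rankWeight_sub_le [Fintype FqN] (a b : ι → FqN) :
    rankWeight Fq (a - b) ≤ rankWeight Fq a + rankWeight Fq b := by
  rw [sub_eq_add_neg]
  simpa [rankWeight_neg] using rankWeight_add_le a (-b)

lemma rankWeight_le_of_mem_span [Fintype Fq] [Fintype FqN] {m : ℕ}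
    (V : Submodule Fq (Fin m → Fq)) {y : Fin m → FqN}
    (hy : y ∈ Submodule.span FqN
      ((fun v : Fin m → Fq => fun j : Fin m => algebraMap Fq FqN (v j)) ''
        (V : Set (Fin m → Fq)))) :
    rankWeight Fq y ≤ Module.finrank Fq ↥V := by
  classical
  have : FiniteDimensional Fq FqN := Module.Finite.of_finite
  set Φ : (Fin m → Fq) →ₗ[Fq] (Fin m → FqN) :=
    LinearMap.pi (fun j => (Algebra.linearMap Fq FqN).comp (LinearMap.proj j)) with hΦ
  have hΦapp : ∀ v : Fin m → Fq, Φ v = fun j => algebraMap Fq FqN (v j) := fun v => rfl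
  set s := Module.finrank Fq ↥V
  let b : Module.Basis (Fin s) Fq ↥V := Module.finBasis Fq ↥V
  -- Step 1 : the span is contained in the FqN-span of the images of the basis
  have h1 : Submodule.span FqN
      ((fun v : Fin m → Fq => fun j : Fin m => algebraMap Fq FqN (v j)) ''
        (V : Set (Fin m → Fq))) ≤
      Submodule.span FqN (Set.range (fun i : Fin s => Φ (b i : Fin m → Fq))) := by
    have key : ∀ u : ↥V, Φ (u : Fin m → Fq) ∈
        Submodule.span FqN (Set.range (fun i : Fin s => Φ (b i : Fin m → Fq))) := by
      intro u
      have hv' : (∑ i, (b.repr u) i • ((b i : ↥V) : Fin m → Fq)) = (u : Fin m → Fq) := by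
        have := congrArg (V.subtype) (b.sum_repr u)
        rw [map_sum] at this
        simpa only [map_smul, Submodule.subtype_apply] using this
      have heq : Φ (u : Fin m → Fq) = ∑ i, (b.repr u) i • Φ (b i : Fin m → Fq) := by
        rw [← hv', map_sum]
        simp
      rw [heq]
      refine Submodule.sum_mem _ fun i _ => ?_
      exact Submodule.smul_of_tower_mem _ _ (Submodule.subset_span ⟨i, rfl⟩)
    rw [Submodule.span_le]
    rintro z ⟨v, hv, rfl⟩
    exact key ⟨v, hv⟩
  -- Step 2 : write y as an FqN-combination of the basis images
  have h2 := h1 hy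
  rw [Submodule.mem_span_range_iff_exists_fun] at h2
  obtain ⟨α, hα⟩ := h2
  -- Step 3 : coordinates of y lie in the Fq-span of the α i
  have h3 : Submodule.span Fq (Set.range y) ≤ Submodule.span Fq (Set.range α) := by
    rw [Submodule.span_le]
    rintro z ⟨j, rfl⟩
    have : y j = ∑ i, ((b i : Fin m → Fq) j) • α i := by
      rw [← hα]
      simp only [Finset.sum_apply, Pi.smul_apply, hΦapp, smul_eq_mul, Algebra.smul_def]
      exact Finset.sum_congr rfl fun i _ => mul_comm _ _
    rw [this]
    exact Submodule.sum_mem _ fun i _ =>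
      Submodule.smul_mem _ _ (Submodule.subset_span ⟨i, rfl⟩)
  calc rankWeight Fq y ≤ Module.finrank Fq ↥(Submodule.span Fq (Set.range α)) :=
        Submodule.finrank_mono h3
    _ ≤ Fintype.card (Fin s) := finrank_range_le_card α
    _ = s := Fintype.card_fin s

end Aux

/-- A code `C ⊆ (F_{q^N})^m` of minimum rank distance `δ` can simultaneously
correct a rank error of rank `t` and a rank erasure of rank `s` whenever `2t + s ≤ δ - 1`:
if `V ⊆ F_q^m` is an `F_q`-subspace of dimension `s`, then for every received word `r`
there is at most one codeword `c ∈ C` such that `r - c = x + y` with `wt_R(x) ≤ t` and `y`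
in the `F_{q^N}`-span of (the embedding into `(F_{q^N})^m` of) `V`. -/
theorem rank_metric_error_erasure_decoding
    (q N : ℕ) (hq : ∃ p e : ℕ, p.Prime ∧ 0 < e ∧ q = p ^ e)
    (Fq FqN : Type) [Field Fq] [Field FqN] [Algebra Fq FqN]
    [Fintype Fq] [Fintype FqN]
    (hcard : Fintype.card Fq = q) (hcardN : Fintype.card FqN = q ^ N)
    (m δ t s : ℕ) (C : Set (Fin m → FqN))
    (hdist : ∀ c₁ ∈ C, ∀ c₂ ∈ C, c₁ ≠ c₂ → δ ≤ rankWeight Fq (c₁ - c₂))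
    (V : Submodule Fq (Fin m → Fq)) (hV : Module.finrank Fq ↥V = s)
    (hts : 2 * t + s + 1 ≤ δ) :
    ∀ r : Fin m → FqN, ∀ c₁ ∈ C, ∀ c₂ ∈ C,
      (∃ x y : Fin m → FqN, r - c₁ = x + y ∧ rankWeight Fq x ≤ t ∧
        y ∈ Submodule.span FqN
          ((fun v : Fin m → Fq => fun j : Fin m => algebraMap Fq FqN (v j)) ''
            (V : Set (Fin m → Fq)))) →
      (∃ x y : Fin m → FqN, r - c₂ = x + y ∧ rankWeight Fq x ≤ t ∧
        y ∈ Submodule.span FqN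
          ((fun v : Fin m → Fq => fun j : Fin m => algebraMap Fq FqN (v j)) ''
            (V : Set (Fin m → Fq)))) →
      c₁ = c₂ := by
  rintro r c₁ hc₁ c₂ hc₂ ⟨x₁, y₁, h₁, hx₁, hy₁⟩ ⟨x₂, y₂, h₂, hx₂, hy₂⟩
  by_contra hne
  have hdelta := hdist c₁ hc₁ c₂ hc₂ hne
  have hdiff : c₁ - c₂ = (x₂ - x₁) + (y₂ - y₁) := by
    have : (r - c₂) - (r - c₁) = c₁ - c₂ := by ring
    rw [← this, h₁, h₂]
    ring
  have hy : rankWeight Fq (y₂ - y₁) ≤ s := by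
    have hmem : y₂ - y₁ ∈ Submodule.span FqN
        ((fun v : Fin m → Fq => fun j : Fin m => algebraMap Fq FqN (v j)) ''
          (V : Set (Fin m → Fq))) := Submodule.sub_mem _ hy₂ hy₁
    calc rankWeight Fq (y₂ - y₁) ≤ Module.finrank Fq ↥V :=
          rankWeight_le_of_mem_span V hmem
      _ = s := hV
  have hbound : rankWeight Fq (c₁ - c₂) ≤ 2 * t + s := by
    calc rankWeight Fq (c₁ - c₂)
        ≤ rankWeight Fq (x₂ - x₁) + rankWeight Fq (y₂ - y₁) := by
          rw [hdiff]; exact rankWeight_add_le _ _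
      _ ≤ (rankWeight Fq x₂ + rankWeight Fq x₁) + s :=
          Nat.add_le_add (rankWeight_sub_le _ _) hy
      _ ≤ (t + t) + s := Nat.add_le_add_right (Nat.add_le_add hx₂ hx₁) s
      _ = 2 * t + s := by ring
  omega
end

section
/- Let q be a prime power, F_q ⊆ F_{q^N}, and let C ⊆ (F_{q^N})^{kα} be a code such that any two distinct codewords are at rank distance at least δ, where δ ≥ 2tα + 1. Let c ∈ C be a codeword, let e ∈ (F_{q^N})^{tα} be arbitrary (the errors introduced by t adversarial nodes each storing α symbols), and let B be any tα × kα matrix over F_q (the F_q-linear propagation of these errors through node repairs). Then c is the unique codeword of C at rank distance at most tα from the corrupted word c + eB. In particular, the original data can be recovered from any k nodes of the concatenated MRD/MDS-array storage scheme in the presence of up to t statically corrupted nodes. -/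
lemma rankWeight_add_le_s11 (Fq : Type) [Field Fq] {FqN : Type} [Field FqN]
    [Algebra Fq FqN] {ι : Type} [Finite ι] (x y : ι → FqN) :
    rankWeight Fq (x + y) ≤ rankWeight Fq x + rankWeight Fq y := by
  have hx : FiniteDimensional Fq (Submodule.span Fq (Set.range x)) :=
    FiniteDimensional.span_of_finite Fq (Set.finite_range x)
  have hy : FiniteDimensional Fq (Submodule.span Fq (Set.range y)) :=
    FiniteDimensional.span_of_finite Fq (Set.finite_range y)
  have hle : Submodule.span Fq (Set.range (x + y)) ≤
      Submodule.span Fq (Set.range x) ⊔ Submodule.span Fq (Set.range y) := by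
    rw [Submodule.span_le]
    rintro _ ⟨i, rfl⟩
    exact Submodule.add_mem _
      (Submodule.mem_sup_left (Submodule.subset_span ⟨i, rfl⟩))
      (Submodule.mem_sup_right (Submodule.subset_span ⟨i, rfl⟩))
  calc Module.finrank Fq (Submodule.span Fq (Set.range (x + y)))
      ≤ Module.finrank Fq
        ↥(Submodule.span Fq (Set.range x) ⊔ Submodule.span Fq (Set.range y)) :=
        Submodule.finrank_mono hle
    _ ≤ _ := Submodule.finrank_add_le_finrank_add_finrank _ _

/-- In the concatenated MRD/MDS-array storage scheme, let
`C ⊆ (F_{q^N})^{kα}` have minimum rank distance `δ ≥ 2tα + 1`, let `c ∈ C`, let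
`e ∈ (F_{q^N})^{tα}` be the errors introduced by `t` adversarial nodes each storing `α`
symbols, and let `B` be any `tα × kα` matrix over `F_q` describing error propagation.
Then `c` is the unique codeword of `C` at rank distance at most `tα` from the corrupted
word `c + eB`; hence the original data is recoverable from any `k` nodes despite up to
`t` statically corrupted nodes. -/
theorem static_error_resilience_of_concatenated_scheme
    (q N : ℕ) (hq : ∃ p e : ℕ, p.Prime ∧ 0 < e ∧ q = p ^ e)
    (Fq FqN : Type) [Field Fq] [Field FqN] [Algebra Fq FqN]
    [Fintype Fq] [Fintype FqN]
    (hcard : Fintype.card Fq = q) (hcardN : Fintype.card FqN = q ^ N)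
    (k α t δ : ℕ) (C : Set (Fin (k * α) → FqN))
    (hdist : ∀ c₁ ∈ C, ∀ c₂ ∈ C, c₁ ≠ c₂ → δ ≤ rankWeight Fq (c₁ - c₂))
    (hδ : 2 * t * α + 1 ≤ δ)
    (c : Fin (k * α) → FqN) (hc : c ∈ C)
    (e : Fin (t * α) → FqN) (B : Matrix (Fin (t * α)) (Fin (k * α)) Fq) :
    rankWeight Fq
        (fun j : Fin (k * α) => ∑ i : Fin (t * α), e i * algebraMap Fq FqN (B i j)) ≤
        t * α ∧
      ∀ c' ∈ C,
        rankWeight Fq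
            ((fun j : Fin (k * α) =>
              c j + ∑ i : Fin (t * α), e i * algebraMap Fq FqN (B i j)) - c') ≤ t * α →
        c' = c := by
  set err : Fin (k * α) → FqN :=
    fun j => ∑ i : Fin (t * α), e i * algebraMap Fq FqN (B i j) with herr
  have hwt : rankWeight Fq err ≤ t * α := by
    have hle : Submodule.span Fq (Set.range err) ≤ Submodule.span Fq (Set.range e) := by
      rw [Submodule.span_le]
      rintro _ ⟨j, rfl⟩
      refine Submodule.sum_mem _ fun i _ => ?_
      have : e i * algebraMap Fq FqN (B i j) = B i j • e i := by
        rw [Algebra.smul_def, mul_comm]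
      rw [this]
      exact Submodule.smul_mem _ _ (Submodule.subset_span ⟨i, rfl⟩)
    have he : FiniteDimensional Fq (Submodule.span Fq (Set.range e)) :=
      FiniteDimensional.span_of_finite Fq (Set.finite_range e)
    calc rankWeight Fq err
        ≤ Module.finrank Fq (Submodule.span Fq (Set.range e)) := Submodule.finrank_mono hle
      _ ≤ Fintype.card (Fin (t * α)) := finrank_range_le_card e
      _ = t * α := Fintype.card_fin _
  refine ⟨hwt, fun c' hc' hnear => ?_⟩
  by_contra hne
  have hdiff : c - c' = ((fun j => c j + err j) - c') + (-err) := by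
    funext j; simp [sub_eq_add_neg]; ring
  have hneg : rankWeight Fq (-err) = rankWeight Fq err := by
    have : Set.range (-err) = -Set.range err := by
      ext z; simp [Set.mem_neg, neg_eq_iff_eq_neg, eq_comm]
    unfold rankWeight
    rw [this, Submodule.span_neg]
  have h1 : rankWeight Fq (c - c') ≤ 2 * t * α := by
    calc rankWeight Fq (c - c')
        ≤ rankWeight Fq ((fun j => c j + err j) - c') + rankWeight Fq (-err) := by
          rw [hdiff]; exact rankWeight_add_le_s11 Fq _ _
      _ ≤ t * α + t * α := add_le_add hnear (hneg ▸ hwt)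
      _ = 2 * t * α := by ring
  have h2 := hdist c hc c' hc' (fun h => hne h.symm)
  omega
end

section
/- Let q be a prime power, F_q ⊆ F_{q^N}, and let g_1, …, g_m ∈ F_{q^N} be linearly independent over F_q. Partition {1, …, m} into disjoint groups G_1, …, G_s and for each i set p_i = ∑_{l ∈ G_i} g_l. Then any subset T of {g_1, …, g_m} ∪ {p_1, …, p_s} that contains, for each i, at most |G_i| elements from the augmented group {g_l : l ∈ G_i} ∪ {p_i}, is linearly independent over F_q. -/
/-- Let `g_1, …, g_m ∈ F_{q^N}` be linearly independent over `F_q`, let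
`G_1, …, G_s` partition `{1, …, m}`, and let `p_i = ∑_{l ∈ G_i} g_l`. Any collection
consisting of points `g_l` (`l ∈ A`) and parities `p_i` (`i ∈ I`) that contains at most
`|G_i|` elements from each augmented group `{g_l : l ∈ G_i} ∪ {p_i}` is linearly
independent over `F_q`. -/
theorem augmented_group_selection_linearIndependent
    (q N : ℕ) (hq : ∃ p e : ℕ, p.Prime ∧ 0 < e ∧ q = p ^ e)
    (Fq FqN : Type) [Field Fq] [Field FqN] [Algebra Fq FqN]
    [Fintype Fq] [Fintype FqN]
    (hcard : Fintype.card Fq = q) (hcardN : Fintype.card FqN = q ^ N)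
    (m s : ℕ) (g : Fin m → FqN) (hg : LinearIndependent Fq g)
    (G : Fin s → Finset (Fin m))
    (hdisj : ∀ i j : Fin s, i ≠ j → Disjoint (G i) (G j))
    (hcover : Finset.univ.biUnion G = (Finset.univ : Finset (Fin m)))
    (p : Fin s → FqN) (hp : ∀ i : Fin s, p i = ∑ l ∈ G i, g l)
    (A : Finset (Fin m)) (I : Finset (Fin s))
    (hsel : ∀ i : Fin s, (A ∩ G i).card + (if i ∈ I then 1 else 0) ≤ (G i).card) :
    LinearIndependent Fq
      (Sum.elim (fun l : {x // x ∈ A} => g l.1) (fun i : {x // x ∈ I} => p i.1)) := by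
  classical
  rw [Fintype.linearIndependent_iff]
  intro f hf
  rw [Fintype.sum_sum_type] at hf
  simp only [Sum.elim_inl, Sum.elim_inr] at hf
  set c : Fin m → Fq := fun l =>
    (if h : l ∈ A then f (Sum.inl ⟨l, h⟩) else 0) +
      ∑ i ∈ I.attach, if l ∈ G i.1 then f (Sum.inr i) else 0 with hc
  have h1 : ∑ l : Fin m, (if h : l ∈ A then f (Sum.inl ⟨l, h⟩) else 0) • g l
      = ∑ a : {x // x ∈ A}, f (Sum.inl a) • g a.1 := by
    rw [← Finset.sum_subset (Finset.subset_univ A)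
      (by intro x _ hx; rw [dif_neg hx, zero_smul])]
    rw [Finset.univ_eq_attach, ← Finset.sum_attach A
      (fun l => (if h : l ∈ A then f (Sum.inl ⟨l, h⟩) else 0) • g l)]
    apply Finset.sum_congr rfl
    intro a _
    rw [dif_pos a.2]
  have h2 : ∑ l : Fin m, (∑ i ∈ I.attach, if l ∈ G i.1 then f (Sum.inr i) else 0) • g l
      = ∑ i : {x // x ∈ I}, f (Sum.inr i) • p i.1 := by
    rw [Finset.univ_eq_attach]
    simp only [Finset.sum_smul]
    rw [Finset.sum_comm]
    apply Finset.sum_congr rfl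
    intro i _
    simp only [ite_smul, zero_smul]
    rw [Finset.sum_ite_mem, Finset.univ_inter, ← Finset.smul_sum, hp]
  have hsum : ∑ l : Fin m, c l • g l = 0 := by
    simp only [hc, add_smul, Finset.sum_add_distrib, h1, h2]
    exact hf
  have hc0 : ∀ l, c l = 0 := Fintype.linearIndependent_iff.mp hg c hsum
  have hinr : ∀ i : {x // x ∈ I}, f (Sum.inr i) = 0 := by
    intro i
    have hi := hsel i.1
    rw [if_pos i.2] at hi
    have hex : ∃ l ∈ G i.1, l ∉ A := by
      by_contra h
      push_neg at h
      have : A ∩ G i.1 = G i.1 := Finset.inter_eq_right.mpr h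
      rw [this] at hi
      omega
    obtain ⟨l, hlG, hlA⟩ := hex
    have h0 := hc0 l
    rw [hc] at h0
    simp only [dif_neg hlA, zero_add] at h0
    rw [Finset.sum_eq_single i] at h0
    · rwa [if_pos hlG] at h0
    · intro j _ hji
      rw [if_neg]
      intro hlGj
      have hne : j.1 ≠ i.1 := fun h => hji (Subtype.ext h)
      exact (Finset.disjoint_left.mp (hdisj j.1 i.1 hne) hlGj) hlG
    · intro h
      exact absurd (Finset.mem_attach I i) h
  intro v
  rcases v with a | i
  · have h0 := hc0 a.1
    rw [hc] at h0
    simp only [dif_pos a.2] at h0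
    have hz : ∑ j ∈ I.attach, (if a.1 ∈ G j.1 then f (Sum.inr j) else 0) = 0 := by
      apply Finset.sum_eq_zero
      intro j _
      rw [hinr j]; simp
    rw [hz, add_zero] at h0
    simpa using h0
  · exact hinr i
end

section
/- Let r ≥ 1 and k ≥ 1 be integers and let c_1, …, c_s be nonnegative integers with c_i ≤ r + 1 for all i. If ∑_{i=1}^{s} c_i ≥ k + ⌈k/r⌉ − 1, then ∑_{i=1}^{s} min(c_i, r) ≥ k. -/
/-- Counting lemma for locally repairable codes. Let `r ≥ 1`, `k ≥ 1` and let
`c_1, …, c_s` be nonnegative integers with `c_i ≤ r + 1`. If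
`∑ c_i ≥ k + ⌈k/r⌉ - 1` then `∑ min(c_i, r) ≥ k`. (Here `⌈k/r⌉ = (k + r - 1) / r` in
natural-number arithmetic.) -/
theorem locally_repairable_counting_lemma
    (r k s : ℕ) (hr : 1 ≤ r) (hk : 1 ≤ k)
    (c : Fin s → ℕ) (hc : ∀ i, c i ≤ r + 1)
    (hsum : k + (k + r - 1) / r - 1 ≤ ∑ i : Fin s, c i) :
    k ≤ ∑ i : Fin s, min (c i) r := by
  by_contra h
  push_neg at h
  set S := ∑ i : Fin s, min (c i) r with hS
  set t := (Finset.univ.filter (fun i : Fin s => c i = r + 1)).card with ht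
  -- ∑ c i ≤ S + t
  have h1 : ∑ i : Fin s, c i ≤ S + t := by
    have : ∑ i : Fin s, c i ≤
        ∑ i : Fin s, (min (c i) r + if c i = r + 1 then 1 else 0) := by
      apply Finset.sum_le_sum
      intro i _
      by_cases hi : c i = r + 1
      · simp [hi]
      · have := hc i
        have : c i ≤ r := by omega
        simp [min_eq_left this, hi]
    rw [Finset.sum_add_distrib] at this
    have hcard : ∑ i : Fin s, (if c i = r + 1 then 1 else 0) = t := by
      rw [ht, Finset.card_filter]
    omega
  -- t * r ≤ S
  have h2 : t * r ≤ S := by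
    have : ∑ i ∈ Finset.univ.filter (fun i : Fin s => c i = r + 1), min (c i) r ≤ S := by
      apply Finset.sum_le_sum_of_subset (Finset.filter_subset _ _)
    have heq : ∑ i ∈ Finset.univ.filter (fun i : Fin s => c i = r + 1), min (c i) r
        = t * r := by
      rw [ht, Finset.sum_congr rfl (fun i hi => ?_), Finset.sum_const, smul_eq_mul]
      have := (Finset.mem_filter.mp hi).2
      simp [this]
    omega
  -- ceiling fact
  set d := (k + r - 1) / r with hd
  have hdr : k + r - 1 < d * r + r := by
    have h3 := Nat.div_add_mod (k + r - 1) r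
    have h4 := Nat.mod_lt (k + r - 1) (show 0 < r by omega)
    calc k + r - 1 = r * d + (k + r - 1) % r := h3.symm
      _ < r * d + r := by omega
      _ = d * r + r := by ring
  have hk1 : k ≤ d * r := by
    generalize d * r = m at hdr
    omega
  have hdt : d ≤ t := by omega
  have hmul : d * r ≤ t * r := Nat.mul_le_mul_right r hdt
  exact Nat.lt_irrefl _ (lt_of_le_of_lt (hk1.trans (hmul.trans h2)) h)
end

section
/- Let q be a prime power, F_q ⊆ F_{q^N}, let r divide m, and let g_1, …, g_m ∈ F_{q^N} be linearly independent over F_q. Partition {1, …, m} into m/r groups G_1, …, G_{m/r} of size r, and set p_i = ∑_{l ∈ G_i} g_l. Let k ≤ m. Then for any subsets A ⊆ {1, …, m} and I ⊆ {1, …, m/r} with |A| + |I| ≥ k + ⌈k/r⌉ − 1, the F_q-linear span of {g_l : l ∈ A} ∪ {p_i : i ∈ I} has dimension at least k over F_q. In other words, after any n − k + 1 − ⌈k/r⌉ erasures from the n = m + m/r evaluation points, the remaining points contain k linearly independent elements. -/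
/-- Let `g_1, …, g_m ∈ F_{q^N}` be linearly independent over `F_q`, with
`{1, …, m}` partitioned into `m/r` groups `G_i` of size `r` and parities
`p_i = ∑_{l ∈ G_i} g_l`, and let `k ≤ m`. For any `A ⊆ {1, …, m}` and
`I ⊆ {1, …, m/r}` with `|A| + |I| ≥ k + ⌈k/r⌉ - 1`, the `F_q`-span of
`{g_l : l ∈ A} ∪ {p_i : i ∈ I}` has dimension at least `k`; i.e. after any
`n - k + 1 - ⌈k/r⌉` erasures from the `n = m + m/r` evaluation points, the remaining
points contain `k` linearly independent elements. -/
theorem locally_repairable_surviving_points_span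
    (q N m r k : ℕ) (hq : ∃ p e : ℕ, p.Prime ∧ 0 < e ∧ q = p ^ e)
    (hr : 0 < r) (hrm : r ∣ m) (hkm : k ≤ m)
    (Fq FqN : Type) [Field Fq] [Field FqN] [Algebra Fq FqN]
    [Fintype Fq] [Fintype FqN]
    (hcard : Fintype.card Fq = q) (hcardN : Fintype.card FqN = q ^ N)
    (g : Fin m → FqN) (hg : LinearIndependent Fq g)
    (G : Fin (m / r) → Finset (Fin m))
    (hGcard : ∀ i, (G i).card = r)
    (hdisj : ∀ i j : Fin (m / r), i ≠ j → Disjoint (G i) (G j))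
    (hcover : Finset.univ.biUnion G = (Finset.univ : Finset (Fin m)))
    (p : Fin (m / r) → FqN) (hp : ∀ i, p i = ∑ l ∈ G i, g l)
    (A : Finset (Fin m)) (I : Finset (Fin (m / r)))
    (hAI : k + (k + r - 1) / r - 1 ≤ A.card + I.card) :
    k ≤ Module.finrank Fq ↥(Submodule.span Fq ((g '' ↑A) ∪ (p '' ↑I))) := by
  classical
  have hfin : Module.Finite Fq FqN := Module.Finite.of_finite
  set c : ℕ := (k + r - 1) / r with hc
  set T : Finset (Fin (m / r)) := I.filter (fun i => G i ⊆ A) with hT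
  by_cases hcase : c ≤ T.card
  · -- In this case |A| ≥ k already.
    have hsub : T.biUnion G ⊆ A := by
      intro l hl
      obtain ⟨i, hi, hlG⟩ := Finset.mem_biUnion.1 hl
      exact (Finset.mem_filter.1 hi).2 hlG
    have hcardb : (T.biUnion G).card = T.card * r := by
      rw [Finset.card_biUnion (fun i _ j _ hij => hdisj i j hij)]
      simp [hGcard]
    have hA : T.card * r ≤ A.card := hcardb ▸ Finset.card_le_card hsub
    have hkA : k ≤ A.card := by
      have h1 := Nat.div_add_mod (k + r - 1) r
      have h2 : (k + r - 1) % r < r := Nat.mod_lt _ hr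
      have h3 : k ≤ r * c := by
        rw [hc]
        set x := r * ((k + r - 1) / r) with hx
        omega
      calc k ≤ r * c := h3
        _ ≤ r * T.card := Nat.mul_le_mul_left r hcase
        _ = T.card * r := mul_comm _ _
        _ ≤ A.card := hA
    have hgi : LinearIndependent Fq (fun a : ↥A => g a) :=
      hg.comp _ Subtype.val_injective
    have hrange : Set.range (fun a : ↥A => g a) = g '' ↑A := by
      ext x; simp
    have hspan : Submodule.span Fq (Set.range (fun a : ↥A => g a)) ≤
        Submodule.span Fq ((g '' ↑A) ∪ (p '' ↑I)) := by
      apply Submodule.span_mono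
      rw [hrange]
      exact Set.subset_union_left
    have hmono := Submodule.finrank_mono (s := Submodule.span Fq (Set.range (fun a : ↥A => g a)))
      (t := Submodule.span Fq ((g '' ↑A) ∪ (p '' ↑I))) hspan
    rw [finrank_span_eq_card hgi, Fintype.card_coe] at hmono
    exact le_trans hkA hmono
  · -- Otherwise throw away the parities whose group lies inside A.
    set I' : Finset (Fin (m / r)) := I.filter (fun i => ¬ G i ⊆ A) with hI'
    have hIcard : T.card + I'.card = I.card := by
      rw [hT, hI']
      exact Finset.card_filter_add_card_filter_not _
    have hk : k ≤ A.card + I'.card := by omega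
    set v : (↥A ⊕ ↥I') → FqN := Sum.elim (fun a : ↥A => g a) (fun i : ↥I' => p i) with hv
    have hinr0 : ∀ (co : (↥A ⊕ ↥I') → Fq),
        (∑ j, co j • v j = 0) → ∀ j, co j = 0 := by
      intro co hco
      set d : Fin m → Fq := fun l =>
        (∑ a : ↥A, if l = ↑a then co (Sum.inl a) else 0) +
          ∑ i : ↥I', if l ∈ G ↑i then co (Sum.inr i) else 0 with hd
      have e1 : ∑ l, (∑ a : ↥A, if l = ↑a then co (Sum.inl a) else 0) • g l =
          ∑ a : ↥A, co (Sum.inl a) • g ↑a := by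
        calc ∑ l, (∑ a : ↥A, if l = ↑a then co (Sum.inl a) else 0) • g l
            = ∑ l, ∑ a : ↥A, (if l = ↑a then co (Sum.inl a) else 0) • g l :=
              Finset.sum_congr rfl fun l _ => Finset.sum_smul
          _ = ∑ a : ↥A, ∑ l, (if l = ↑a then co (Sum.inl a) else 0) • g l := Finset.sum_comm
          _ = ∑ a : ↥A, co (Sum.inl a) • g ↑a := by
              refine Finset.sum_congr rfl fun a _ => ?_
              simp [ite_smul]
      have e2 : ∑ l, (∑ i : ↥I', if l ∈ G ↑i then co (Sum.inr i) else 0) • g l =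
          ∑ i : ↥I', co (Sum.inr i) • p ↑i := by
        calc ∑ l, (∑ i : ↥I', if l ∈ G ↑i then co (Sum.inr i) else 0) • g l
            = ∑ l, ∑ i : ↥I', (if l ∈ G ↑i then co (Sum.inr i) else 0) • g l :=
              Finset.sum_congr rfl fun l _ => Finset.sum_smul
          _ = ∑ i : ↥I', ∑ l, (if l ∈ G ↑i then co (Sum.inr i) else 0) • g l := Finset.sum_comm
          _ = ∑ i : ↥I', co (Sum.inr i) • p ↑i := by
              refine Finset.sum_congr rfl fun i _ => ?_
              rw [hp, Finset.smul_sum]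
              simp only [ite_smul, zero_smul]
              rw [Finset.sum_ite_mem, Finset.univ_inter]
      have hsum : ∑ l, d l • g l = 0 := by
        have e0 : ∑ l, d l • g l =
            (∑ l, (∑ a : ↥A, if l = ↑a then co (Sum.inl a) else 0) • g l) +
              ∑ l, (∑ i : ↥I', if l ∈ G ↑i then co (Sum.inr i) else 0) • g l := by
          rw [← Finset.sum_add_distrib]
          exact Finset.sum_congr rfl fun l _ => by rw [hd, add_smul]
        rw [e0, e1, e2, ← hco, Fintype.sum_sum_type]
        simp [hv]
      have hdz : ∀ l, d l = 0 := Fintype.linearIndependent_iff.1 hg d hsum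
      have hinr : ∀ i : ↥I', co (Sum.inr i) = 0 := by
        intro i
        have hi2 : ¬ G ↑i ⊆ A := (Finset.mem_filter.1 i.2).2
        obtain ⟨l, hlG, hlA⟩ := Finset.not_subset.1 hi2
        have hdl := hdz l
        rw [hd] at hdl
        have h1 : (∑ a : ↥A, if l = ↑a then co (Sum.inl a) else 0) = 0 := by
          refine Finset.sum_eq_zero fun a _ => ?_
          rw [if_neg]
          rintro rfl
          exact hlA a.2
        have h2 : (∑ j : ↥I', if l ∈ G ↑j then co (Sum.inr j) else 0) = co (Sum.inr i) := by
          rw [Finset.sum_eq_single i]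
          · rw [if_pos hlG]
          · intro j _ hji
            rw [if_neg]
            intro hlGj
            have hne : (↑j : Fin (m / r)) ≠ ↑i := fun h => hji (Subtype.ext h)
            exact (Finset.disjoint_left.1 (hdisj _ _ hne)) hlGj hlG
          · intro h
            exact absurd (Finset.mem_univ i) h
        simp only [h1, h2, zero_add] at hdl
        exact hdl
      intro j
      rcases j with a | i
      · have hdl := hdz ↑a
        rw [hd] at hdl
        have h2 : (∑ j : ↥I', if (↑a : Fin m) ∈ G ↑j then co (Sum.inr j) else 0) = 0 := by
          refine Finset.sum_eq_zero fun j _ => ?_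
          rw [hinr j]
          simp
        have h1 : (∑ a' : ↥A, if (↑a : Fin m) = ↑a' then co (Sum.inl a') else 0)
            = co (Sum.inl a) := by
          rw [Finset.sum_eq_single a]
          · rw [if_pos rfl]
          · intro a' _ ha'
            rw [if_neg]
            intro h
            exact ha' (Subtype.ext h.symm)
          · intro h
            exact absurd (Finset.mem_univ a) h
        simp only [h1, h2, add_zero] at hdl
        exact hdl
      · exact hinr i
    have hli : LinearIndependent Fq v := Fintype.linearIndependent_iff.2 hinr0
    have hrange : Set.range v ⊆ (g '' ↑A) ∪ (p '' ↑I) := by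
      rw [hv, Set.Sum.elim_range]
      apply Set.union_subset_union
      · rintro x ⟨a, rfl⟩
        exact ⟨↑a, a.2, rfl⟩
      · rintro x ⟨i, rfl⟩
        exact ⟨↑i, (Finset.mem_filter.1 i.2).1, rfl⟩
    have hmono := Submodule.finrank_mono (s := Submodule.span Fq (Set.range v))
      (t := Submodule.span Fq ((g '' ↑A) ∪ (p '' ↑I))) (Submodule.span_mono hrange)
    rw [finrank_span_eq_card hli, Fintype.card_sum, Fintype.card_coe, Fintype.card_coe] at hmono
    exact le_trans hk hmono
end

section
/- Let q be a prime power, F_q ⊆ F_{q^N}, let k ≤ m ≤ N, and let g_1, …, g_m ∈ F_{q^N} be linearly independent over F_q. Partition {1, …, m} into disjoint groups G_1, …, G_s and set p_i = ∑_{l ∈ G_i} g_l. For a nonzero linearized polynomial f of q-degree at most k − 1, the extended codeword c = (f(g_1), …, f(g_m), f(p_1), …, f(p_s)) ∈ (F_{q^N})^{m+s} has rank weight at least m − k + 1. Consequently, if the minimum rank distance δ = m − k + 1 of the underlying Gabidulin code satisfies δ ≥ 2t + 1, then for any such codeword c, any e ∈ (F_{q^N})^t, and any t × (m + s) matrix B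 over F_q, c is the unique codeword of the locally repairable code at rank distance at most t from c + eB; i.e., the locally repairable code C^loc tolerates up to t static adversarial errors. -/
open Polynomial

section Aux

variable {Fq FqN : Type} [Field Fq] [Field FqN] [Algebra Fq FqN]

lemma rankWeight_aux_mono [FiniteDimensional Fq FqN] {ι κ : Type}
    (x : ι → FqN) (y : κ → FqN) (h : Set.range x ⊆ Set.range y) :
    Module.finrank Fq ↥(Submodule.span Fq (Set.range x)) ≤
      Module.finrank Fq ↥(Submodule.span Fq (Set.range y)) :=
  Submodule.finrank_mono (Submodule.span_mono h)

lemma rankWeight_aux_add [FiniteDimensional Fq FqN] {ι : Type} (x y : ι → FqN) :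
    Module.finrank Fq ↥(Submodule.span Fq (Set.range (x + y))) ≤
      Module.finrank Fq ↥(Submodule.span Fq (Set.range x)) +
        Module.finrank Fq ↥(Submodule.span Fq (Set.range y)) := by
  have hle : Submodule.span Fq (Set.range (x + y)) ≤
      Submodule.span Fq (Set.range x) ⊔ Submodule.span Fq (Set.range y) := by
    rw [Submodule.span_le]
    rintro - ⟨i, rfl⟩
    exact Submodule.add_mem _
      (Submodule.mem_sup_left (Submodule.subset_span ⟨i, rfl⟩))
      (Submodule.mem_sup_right (Submodule.subset_span ⟨i, rfl⟩))
  exact (Submodule.finrank_mono hle).trans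
    (Submodule.finrank_add_le_finrank_add_finrank _ _)


open Polynomial

lemma gabidulin_bound (p e q k m : ℕ) (hp : p.Prime) (he : 0 < e) (hqe : q = p ^ e)
    (hkm : k ≤ m)
    (Fq FqN : Type) [Field Fq] [Field FqN] [Algebra Fq FqN] [Fintype Fq] [Fintype FqN]
    (hcard : Fintype.card Fq = q)
    (g : Fin m → FqN) (hg : LinearIndependent Fq g)
    (a : Fin k → FqN) (ha : a ≠ 0) :
    m - k + 1 ≤ Module.finrank Fq ↥(Submodule.span Fq
      (Set.range fun l : Fin m => ∑ i : Fin k, a i * g l ^ q ^ (i : ℕ))) := by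
  classical
  haveI : Fact p.Prime := ⟨hp⟩
  -- k ≥ 1
  have hk : 1 ≤ k := by
    by_contra h
    push_neg at h
    interval_cases k
    exact ha (funext fun i => i.elim0)
  -- characteristic
  have hq1 : 1 < q := by
    rw [hqe]; exact Nat.one_lt_pow he.ne' hp.one_lt
  haveI : CharP Fq (ringChar Fq) := ringChar.charP Fq
  have hrprime : (ringChar Fq).Prime := CharP.char_is_prime Fq (ringChar Fq)
  obtain ⟨n, -, hcard'⟩ := FiniteField.card Fq (ringChar Fq)
  have hpr : p = ringChar Fq := by
    have hd : p ∣ (ringChar Fq) ^ (n : ℕ) := by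
      rw [← hcard', hcard, hqe]
      exact dvd_pow_self p he.ne'
    exact (Nat.prime_dvd_prime_iff_eq hp hrprime).mp (hp.dvd_of_dvd_pow hd)
  haveI hCFq : CharP Fq p := by rw [hpr]; infer_instance
  haveI : CharP FqN p :=
    charP_of_injective_algebraMap (algebraMap Fq FqN).injective p
  haveI : FiniteDimensional Fq FqN := Module.finite_iff_finite.mpr inferInstance
  -- the linearized polynomial as an Fq-linear map
  have hfrob : ∀ (x y : FqN) (j : ℕ), (x + y) ^ q ^ j = x ^ q ^ j + y ^ q ^ j := by
    intro x y j
    have hq : q ^ j = p ^ (e * j) := by rw [hqe, ← pow_mul]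
    rw [hq, add_pow_char_pow]
  have hsmul : ∀ (c : Fq) (x : FqN) (j : ℕ), (c • x) ^ q ^ j = c • x ^ q ^ j := by
    intro c x j
    rw [Algebra.smul_def, Algebra.smul_def, mul_pow, ← map_pow]
    congr 2
    calc c ^ q ^ j = c ^ Fintype.card Fq ^ j := by rw [hcard]
      _ = c := FiniteField.pow_card_pow j c
  let F : FqN →ₗ[Fq] FqN :=
    { toFun := fun x => ∑ i : Fin k, a i * x ^ q ^ (i : ℕ)
      map_add' := by
        intro x y
        simp [hfrob, mul_add, Finset.sum_add_distrib]
      map_smul' := by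
        intro c x
        simp [hsmul, Finset.smul_sum, mul_smul_comm] }
  -- the polynomial and its roots
  set P : FqN[X] := ∑ i : Fin k, C (a i) * X ^ (q ^ (i : ℕ)) with hP
  have hqinj : Function.Injective fun i : Fin k => q ^ (i : ℕ) := by
    intro i j hij
    exact Fin.ext (Nat.pow_right_injective hq1 hij)
  have hP0 : P ≠ 0 := by
    obtain ⟨j, hj⟩ := Function.ne_iff.mp ha
    intro h0
    apply hj
    have : P.coeff (q ^ (j : ℕ)) = a j := by
      rw [hP, Polynomial.finset_sum_coeff]
      rw [Finset.sum_eq_single j]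
      · simp
      · intro i _ hij
        have hne : ¬ q ^ (j : ℕ) = q ^ (i : ℕ) := fun h => hij (hqinj h).symm
        rw [coeff_C_mul, coeff_X_pow, if_neg hne, mul_zero]
      · simp
    rw [h0] at this
    simpa using this.symm
  have hdeg : P.natDegree ≤ q ^ (k - 1) := by
    refine (Polynomial.natDegree_sum_le _ _).trans ?_
    rw [Finset.fold_max_le]
    constructor
    · positivity
    · intro i _
      refine (natDegree_C_mul_le _ _).trans ?_
      rw [natDegree_X_pow]
      exact Nat.pow_le_pow_right (by omega) (by omega)
  -- kernel bound
  haveI : Fintype ↥(LinearMap.ker F) := Fintype.ofFinite _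
  have hker_card : Fintype.card ↥(LinearMap.ker F) ≤ q ^ (k - 1) := by
    have hsub : ((LinearMap.ker F : Submodule Fq FqN) : Set FqN) ⊆ ↑P.roots.toFinset := by
      intro x hx
      have hx' : ∑ i : Fin k, a i * x ^ q ^ (i : ℕ) = 0 := hx
      rw [Finset.mem_coe, Multiset.mem_toFinset, Polynomial.mem_roots hP0]
      show P.eval x = 0
      rw [hP]
      simpa [Polynomial.eval_finset_sum] using hx'
    calc Fintype.card ↥(LinearMap.ker F)
        = ((LinearMap.ker F : Submodule Fq FqN) : Set FqN).toFinset.card :=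
          (Set.toFinset_card _).symm
      _ ≤ P.roots.toFinset.card :=
          Finset.card_le_card (Set.toFinset_subset.mpr hsub)
      _ ≤ Multiset.card P.roots := Multiset.toFinset_card_le _
      _ ≤ P.natDegree := P.card_roots'
      _ ≤ q ^ (k - 1) := hdeg
  have hker : Module.finrank Fq ↥(LinearMap.ker F) ≤ k - 1 := by
    rw [← Nat.pow_le_pow_iff_right hq1, ← hcard]
    calc Fintype.card Fq ^ Module.finrank Fq ↥(LinearMap.ker F)
        = Fintype.card ↥(LinearMap.ker F) := (Module.card_eq_pow_finrank (K := Fq)).symm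
      _ ≤ q ^ (k - 1) := hker_card
      _ = Fintype.card Fq ^ (k - 1) := by rw [hcard]
  -- rank-nullity on the span of g
  set V : Submodule Fq FqN := Submodule.span Fq (Set.range g) with hV
  have hdimV : Module.finrank Fq ↥V = m := by
    rw [hV, finrank_span_eq_card hg, Fintype.card_fin]
  set F' : ↥V →ₗ[Fq] FqN := F.comp V.subtype with hF'
  have hrn : Module.finrank Fq ↥(LinearMap.range F') +
      Module.finrank Fq ↥(LinearMap.ker F') = m := by
    rw [LinearMap.finrank_range_add_finrank_ker F', hdimV]
  have hrange : LinearMap.range F' = Submodule.span Fq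
      (Set.range fun l : Fin m => ∑ i : Fin k, a i * g l ^ q ^ (i : ℕ)) := by
    rw [hF', LinearMap.range_comp, Submodule.range_subtype, hV,
      Submodule.map_span, ← Set.range_comp]
    rfl
  have hkerF' : Module.finrank Fq ↥(LinearMap.ker F') ≤ k - 1 := by
    refine le_trans ?_ hker
    have hinj : Function.Injective V.subtype := Subtype.val_injective
    have := LinearEquiv.finrank_eq
      (Submodule.equivMapOfInjective V.subtype hinj (LinearMap.ker F'))
    rw [this]
    apply Submodule.finrank_mono
    rw [hF', LinearMap.ker_comp]
    exact Submodule.map_comap_le _ _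
  rw [← hrange]
  omega

section MainAux

variable {Fq FqN : Type} [Field Fq] [Field FqN] [Algebra Fq FqN]

lemma span_range_neg_aux {ι : Type} (x : ι → FqN) :
    Submodule.span Fq (Set.range (-x)) = Submodule.span Fq (Set.range x) := by
  have h : Set.range (-x) = -Set.range x := by
    ext y
    simp only [Set.mem_range, Set.mem_neg, Pi.neg_apply]
    constructor
    · rintro ⟨i, rfl⟩; exact ⟨i, by simp⟩
    · rintro ⟨i, hi⟩; exact ⟨i, by rw [hi, neg_neg]⟩
  rw [h, Submodule.span_neg]

end MainAux

/-- For the locally repairable code `C^loc` built from a Gabidulin code with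
`F_q`-linearly independent evaluation points `g_1, …, g_m` (with `k ≤ m ≤ N`), repair groups
`G_1, …, G_s` partitioning `{1, …, m}` and parity points `p_i = ∑_{l ∈ G_i} g_l`:
(1) every extended codeword `(f(g_1), …, f(g_m), f(p_1), …, f(p_s))` of a nonzero
linearized polynomial `f` of q-degree at most `k - 1` has rank weight at least `m - k + 1`;
(2) consequently, if `δ = m - k + 1 ≥ 2t + 1`, then for any codeword `c ∈ C^loc`, any
`e ∈ (F_{q^N})^t` and any `t × (m + s)` matrix `B` over `F_q`, `c` is the unique codeword of
`C^loc` at rank distance at most `t` from `c + eB`; i.e. `C^loc` tolerates up to `t` static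
adversarial errors. -/
theorem locally_repairable_code_static_error_tolerance
    (q N m s k t : ℕ) (hq : ∃ p e : ℕ, p.Prime ∧ 0 < e ∧ q = p ^ e)
    (hkm : k ≤ m) (hmN : m ≤ N)
    (Fq FqN : Type) [Field Fq] [Field FqN] [Algebra Fq FqN]
    [Fintype Fq] [Fintype FqN]
    (hcard : Fintype.card Fq = q) (hcardN : Fintype.card FqN = q ^ N)
    (g : Fin m → FqN) (hg : LinearIndependent Fq g)
    (G : Fin s → Finset (Fin m))
    (hdisj : ∀ i j : Fin s, i ≠ j → Disjoint (G i) (G j))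
    (hcover : Finset.univ.biUnion G = (Finset.univ : Finset (Fin m)))
    (enc : (Fin k → FqN) → (Fin m ⊕ Fin s) → FqN)
    (henc : ∀ a : Fin k → FqN,
      enc a = Sum.elim (fun l : Fin m => ∑ i : Fin k, a i * g l ^ q ^ (i : ℕ))
        (fun i' : Fin s => ∑ i : Fin k, a i * (∑ l ∈ G i', g l) ^ q ^ (i : ℕ)))
    (Cloc : Set ((Fin m ⊕ Fin s) → FqN))
    (hCloc : Cloc = {c | ∃ a : Fin k → FqN, c = enc a}) :
    (∀ a : Fin k → FqN, a ≠ 0 → m - k + 1 ≤ rankWeight Fq (enc a)) ∧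
      (2 * t + 1 ≤ m - k + 1 →
        ∀ c ∈ Cloc, ∀ (e : Fin t → FqN) (B : Matrix (Fin t) (Fin m ⊕ Fin s) Fq),
          rankWeight Fq
              (fun x : Fin m ⊕ Fin s => ∑ i : Fin t, e i * algebraMap Fq FqN (B i x)) ≤ t ∧
            ∀ c' ∈ Cloc,
              rankWeight Fq
                  ((fun x : Fin m ⊕ Fin s =>
                    c x + ∑ i : Fin t, e i * algebraMap Fq FqN (B i x)) - c') ≤ t →
              c' = c) := by
  classical
  obtain ⟨p, e₀, hp, he₀, hqe⟩ := hq
  haveI : FiniteDimensional Fq FqN := Module.finite_iff_finite.mpr inferInstance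
  have claim1 : ∀ a : Fin k → FqN, a ≠ 0 → m - k + 1 ≤ rankWeight Fq (enc a) := by
    intro a ha
    refine (gabidulin_bound p e₀ q k m hp he₀ hqe hkm Fq FqN hcard g hg a ha).trans ?_
    apply rankWeight_aux_mono
    rintro - ⟨l, rfl⟩
    exact ⟨Sum.inl l, by rw [henc a]; rfl⟩
  refine ⟨claim1, ?_⟩
  intro hδ c hc e B
  set err : (Fin m ⊕ Fin s) → FqN :=
    fun x => ∑ i : Fin t, e i * algebraMap Fq FqN (B i x) with herr
  have herr_le : rankWeight Fq err ≤ t := by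
    have hle : Submodule.span Fq (Set.range err) ≤ Submodule.span Fq (Set.range e) := by
      rw [Submodule.span_le]
      rintro - ⟨x, rfl⟩
      apply Submodule.sum_mem
      intro i _
      have hsm : e i * algebraMap Fq FqN (B i x) = (B i x) • e i := by
        rw [Algebra.smul_def]; ring
      rw [hsm]
      exact Submodule.smul_mem _ _ (Submodule.subset_span ⟨i, rfl⟩)
    refine (Submodule.finrank_mono hle).trans ?_
    haveI : Fintype ↥(Set.range e) := Set.fintypeRange e
    refine (finrank_span_le_card (Set.range e)).trans ?_
    rw [Set.toFinset_range]
    exact Finset.card_image_le.trans (by simp)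
  refine ⟨herr_le, ?_⟩
  intro c' hc' hclose
  rw [hCloc] at hc hc'
  obtain ⟨a, rfl⟩ := hc
  obtain ⟨a', rfl⟩ := hc'
  have hkey : (enc a - enc a') =
      ((fun x : Fin m ⊕ Fin s => enc a x + err x) - enc a') + (-err) := by
    funext x
    simp only [Pi.add_apply, Pi.sub_apply, Pi.neg_apply]
    ring
  have h2 : rankWeight Fq (enc a - enc a') ≤ 2 * t := by
    rw [hkey]
    refine (rankWeight_aux_add _ _).trans ?_
    have hneg : Module.finrank Fq ↥(Submodule.span Fq (Set.range (-err))) =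
        rankWeight Fq err := by
      unfold rankWeight
      rw [span_range_neg_aux]
    rw [hneg]
    have hclose' : Module.finrank Fq ↥(Submodule.span Fq
        (Set.range ((fun x : Fin m ⊕ Fin s => enc a x + err x) - enc a'))) ≤ t := hclose
    omega
  have henc_sub : enc (a - a') = enc a - enc a' := by
    funext x
    rw [henc (a - a'), henc a, henc a']
    cases x <;> simp [sub_mul, Finset.sum_sub_distrib]
  have haa : a - a' = 0 := by
    by_contra hne
    have := claim1 (a - a') hne
    rw [henc_sub] at this
    omega
  have : a' = a := by
    have := sub_eq_zero.mp haa
    exact this.symm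
  rw [this]
end Aux
end

section
/- Let q be a prime power, F_q ⊆ F_{q^N}, let r divide m, let r < k ≤ m ≤ N, and let g_1, …, g_m ∈ F_{q^N} be linearly independent over F_q. Partition {1, …, m} into m/r groups G_1, …, G_{m/r} of size r and set p_i = ∑_{l ∈ G_i} g_l and n = m + m/r. Then for every nonzero linearized polynomial f of q-degree at most k − 1, the codeword (f(g_1), …, f(g_m), f(p_1), …, f(p_{m/r})) ∈ (F_{q^N})^n has at most k + ⌈k/r⌉ − 2 zero coordinates; equivalently, its Hamming weight is at least n − k + 2 − ⌈k/r⌉. Hence the locally repairable code C^loc has minimum Hamming distance at least n − k + 2 − ⌈k/r⌉ and attains the locality bound d_min ≤ n − k + 2 − ⌈k/r⌉. -/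
/-- Minimum distance of the locally repairable code `C^loc` (case `r ∣ m`).
With `r ∣ m`, `r < k ≤ m ≤ N`, `F_q`-linearly independent evaluation points
`g_1, …, g_m ∈ F_{q^N}`, groups `G_1, …, G_{m/r}` of size `r` partitioning `{1, …, m}`, and
parity points `p_i = ∑_{l ∈ G_i} g_l`, every codeword of a nonzero linearized polynomial `f`
of q-degree at most `k - 1` has at most `k + ⌈k/r⌉ - 2` zero coordinates; equivalently its
Hamming weight is at least `n - k + 2 - ⌈k/r⌉` where `n = m + m/r`. Hence `C^loc` attains
the locality bound `d_min ≤ n - k + 2 - ⌈k/r⌉`. (Here `⌈k/r⌉ = (k + r - 1) / r`.) -/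
theorem locally_repairable_code_optimal_distance_divisible_case
    (q N m r k : ℕ) (hq : ∃ p e : ℕ, p.Prime ∧ 0 < e ∧ q = p ^ e)
    (hr : 0 < r) (hrm : r ∣ m) (hrk : r < k) (hkm : k ≤ m) (hmN : m ≤ N)
    (Fq FqN : Type) [Field Fq] [Field FqN] [Algebra Fq FqN]
    [Fintype Fq] [Fintype FqN]
    (hcard : Fintype.card Fq = q) (hcardN : Fintype.card FqN = q ^ N)
    (g : Fin m → FqN) (hg : LinearIndependent Fq g)
    (G : Fin (m / r) → Finset (Fin m))
    (hGcard : ∀ i, (G i).card = r)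
    (hdisj : ∀ i j : Fin (m / r), i ≠ j → Disjoint (G i) (G j))
    (hcover : Finset.univ.biUnion G = (Finset.univ : Finset (Fin m)))
    (a : Fin k → FqN) (ha : a ≠ 0)
    (c : (Fin m ⊕ Fin (m / r)) → FqN)
    (hc : c = Sum.elim (fun l : Fin m => ∑ i : Fin k, a i * g l ^ q ^ (i : ℕ))
      (fun i' : Fin (m / r) => ∑ i : Fin k, a i * (∑ l ∈ G i', g l) ^ q ^ (i : ℕ))) :
    Nat.card {x : Fin m ⊕ Fin (m / r) // c x = 0} ≤ k + (k + r - 1) / r - 2 ∧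
      (m + m / r) - k + 2 - (k + r - 1) / r ≤
        Nat.card {x : Fin m ⊕ Fin (m / r) // c x ≠ 0} := by
  classical
  obtain ⟨p, e, hp, he, hqpe⟩ := hq
  haveI : Fact p.Prime := ⟨hp⟩
  have hq2 : 2 ≤ q := by
    rw [hqpe]
    calc 2 ≤ p := hp.two_le
    _ ≤ p ^ e := Nat.le_self_pow he.ne' p
  have hk2 : 2 ≤ k := by omega
  -- characteristic of FqN is p
  haveI hcharp : CharP FqN p := by
    have h1 : ((q ^ N : ℕ) : FqN) = 0 := by
      rw [← hcardN]; exact FiniteField.cast_card_eq_zero FqN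
    have h2 : ringChar FqN ∣ q ^ N := (CharP.cast_eq_zero_iff FqN (ringChar FqN) _).mp h1
    have h3 : (ringChar FqN).Prime := CharP.char_is_prime FqN (ringChar FqN)
    have h4 : ringChar FqN ∣ p := by
      have hqN : q ^ N = p ^ (e * N) := by rw [hqpe, ← pow_mul]
      exact h3.dvd_of_dvd_pow (hqN ▸ h2)
    have h5 : ringChar FqN = p := (Nat.prime_dvd_prime_iff_eq h3 hp).mp h4
    exact h5 ▸ ringChar.charP FqN
  set F : FqN → FqN := fun x => ∑ i : Fin k, a i * x ^ q ^ (i : ℕ) with hF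
  have hqpow : ∀ i : ℕ, q ^ i = p ^ (e * i) := by
    intro i; rw [hqpe, ← pow_mul]
  have hadd : ∀ (i : ℕ) (x y : FqN), (x + y) ^ q ^ i = x ^ q ^ i + y ^ q ^ i := by
    intro i x y; rw [hqpow i]; exact add_pow_char_pow x y p (e * i)
  have hsmul : ∀ (i : ℕ) (cc : Fq) (x : FqN),
      ((cc • x) ^ q ^ i) = cc • (x ^ q ^ i) := by
    intro i cc x
    rw [Algebra.smul_def, Algebra.smul_def, mul_pow, ← map_pow]
    congr 2
    calc cc ^ q ^ i = cc ^ Fintype.card Fq ^ i := by rw [hcard]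
    _ = cc := FiniteField.pow_card_pow i cc
  -- the kernel of F as an Fq-submodule
  set V : Submodule Fq FqN :=
    { carrier := {x | F x = 0}
      add_mem' := by
        intro x y hx hy
        simp only [Set.mem_setOf_eq, hF] at *
        simp only [hadd, mul_add, Finset.sum_add_distrib, hx, hy, add_zero]
      zero_mem' := by
        have hqi : ∀ i : ℕ, q ^ i ≠ 0 := fun i => (pow_pos (by omega) i).ne'
        simp only [Set.mem_setOf_eq, hF]
        exact Finset.sum_eq_zero (fun i _ => by rw [zero_pow (hqi i), mul_zero])
      smul_mem' := by
        intro cc x hx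
        simp only [Set.mem_setOf_eq, hF] at *
        have hterm : ∀ i : Fin k, a i * (cc • x) ^ q ^ (i : ℕ)
            = cc • (a i * x ^ q ^ (i : ℕ)) := by
          intro i
          rw [hsmul, Algebra.smul_def, Algebra.smul_def]
          ring
        simp only [hterm, ← Finset.smul_sum, hx, smul_zero] } with hV
  -- polynomial whose roots contain the zero set
  set P : Polynomial FqN := ∑ i : Fin k, Polynomial.C (a i) * Polynomial.X ^ (q ^ (i : ℕ))
    with hP
  have hqinj : Function.Injective (fun i : ℕ => q ^ i) := fun i j h =>
    Nat.pow_right_injective hq2 h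
  obtain ⟨i₀, hi₀⟩ : ∃ i, a i ≠ 0 := by
    by_contra h
    push_neg at h
    exact ha (funext h)
  have hPne : P ≠ 0 := by
    intro h
    have hco : P.coeff (q ^ (i₀ : ℕ)) = a i₀ := by
      rw [hP, Polynomial.finset_sum_coeff]
      rw [Finset.sum_eq_single i₀]
      · simp [Polynomial.coeff_C_mul, Polynomial.coeff_X_pow]
      · intro b _ hb
        have hne : q ^ (i₀ : ℕ) ≠ q ^ (b : ℕ) := by
          intro hcon
          exact hb (Fin.ext (hqinj hcon).symm)
        simp [Polynomial.coeff_C_mul, Polynomial.coeff_X_pow, hne]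
      · simp
    rw [h] at hco
    simp at hco
    exact hi₀ hco.symm
  have hPdeg : P.natDegree ≤ q ^ (k - 1) := by
    apply Polynomial.natDegree_sum_le_of_forall_le
    intro i _
    refine (Polynomial.natDegree_C_mul_le _ _).trans ?_
    rw [Polynomial.natDegree_X_pow]
    exact Nat.pow_le_pow_right (by omega) (by omega)
  have hroot : ∀ x : FqN, F x = 0 → x ∈ P.roots.toFinset := by
    intro x hx
    rw [Multiset.mem_toFinset, Polynomial.mem_roots hPne]
    show P.eval x = 0
    rw [hP, Polynomial.eval_finset_sum]
    simpa [hF] using hx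
  -- bound the Fq-dimension of V
  haveI : Module.Finite Fq FqN := Module.Finite.of_finite
  haveI : Module.Finite Fq V := Module.Finite.of_finite
  have hcardV : Fintype.card V ≤ q ^ (k - 1) := by
    have hsub : (Finset.univ.filter (fun x : FqN => F x = 0)) ⊆ P.roots.toFinset := by
      intro x hx
      rw [Finset.mem_filter] at hx
      exact hroot x hx.2
    calc Fintype.card V = Fintype.card {x : FqN // F x = 0} :=
          Fintype.card_congr (Equiv.subtypeEquivRight (fun x => Iff.rfl))
    _ = (Finset.univ.filter (fun x : FqN => F x = 0)).card := Fintype.card_subtype _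
    _ ≤ P.roots.toFinset.card := Finset.card_le_card hsub
    _ ≤ Multiset.card P.roots := Multiset.toFinset_card_le _
    _ ≤ P.natDegree := P.card_roots'
    _ ≤ q ^ (k - 1) := hPdeg
  have hdimV : Module.finrank Fq V ≤ k - 1 := by
    have h1 : Fintype.card V = Fintype.card Fq ^ Module.finrank Fq V := Module.card_eq_pow_finrank
    rw [hcard] at h1
    rw [h1] at hcardV
    exact (Nat.pow_le_pow_iff_right (by omega)).mp hcardV
  -- zero sets
  set Pp : Fin (m / r) → FqN := fun i => ∑ l ∈ G i, g l with hPp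
  set S : Finset (Fin m) := Finset.univ.filter (fun l => F (g l) = 0) with hS
  set T : Finset (Fin (m / r)) := Finset.univ.filter (fun i => F (Pp i) = 0) with hT
  set T1 : Finset (Fin (m / r)) := T.filter (fun i => G i ⊆ S) with hT1
  set T2 : Finset (Fin (m / r)) := T.filter (fun i => ¬ G i ⊆ S) with hT2
  -- linear independence of the coefficient vectors
  set M : (↥S ⊕ ↥T2) → (Fin m → Fq) :=
    Sum.elim (fun l : ↥S => (Pi.single (l : Fin m) 1 : Fin m → Fq))
      (fun i : ↥T2 => fun l => if l ∈ G (i : Fin (m / r)) then (1 : Fq) else 0) with hM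
  have hMind : LinearIndependent Fq M := by
    rw [Fintype.linearIndependent_iff]
    intro cc hcc
    have hccT2 : ∀ i : ↥T2, cc (Sum.inr i) = 0 := by
      intro i
      have hi2 : ¬ G (i : Fin (m / r)) ⊆ S := (Finset.mem_filter.mp i.2).2
      obtain ⟨l₀, hl₀G, hl₀S⟩ := Finset.not_subset.mp hi2
      have hval := congrFun hcc l₀
      simp only [hM, Fintype.sum_sum_type, Sum.elim_inl, Sum.elim_inr, Pi.add_apply,
        Finset.sum_apply, Pi.smul_apply, smul_eq_mul, Pi.zero_apply, Pi.single_apply,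
        mul_ite, mul_one, mul_zero] at hval
      have h1 : ∑ l : ↥S, (if l₀ = ((l : ↥S) : Fin m) then cc (Sum.inl l) else 0) = 0 :=
        Finset.sum_eq_zero (fun l _ => by
          have hne : l₀ ≠ (l : Fin m) := fun h => hl₀S (h ▸ l.2)
          simp [hne])
      have h2 : ∑ j : ↥T2, (if l₀ ∈ G ((j : ↥T2) : Fin (m / r)) then cc (Sum.inr j) else 0)
          = cc (Sum.inr i) := by
        rw [Finset.sum_eq_single i]
        · simp [hl₀G]
        · intro j _ hj
          have hdj : Disjoint (G (j : Fin (m / r))) (G (i : Fin (m / r))) :=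
            hdisj _ _ (fun hji => hj (Subtype.ext hji))
          have hnl : l₀ ∉ G (j : Fin (m / r)) :=
            fun hmem => (Finset.disjoint_left.mp hdj hmem) hl₀G
          simp [hnl]
        · intro h
          exact absurd (Finset.mem_univ i) h
      rw [h1, h2, zero_add] at hval
      exact hval
    have hccS : ∀ l : ↥S, cc (Sum.inl l) = 0 := by
      intro l
      have hval := congrFun hcc (l : Fin m)
      simp only [hM, Fintype.sum_sum_type, Sum.elim_inl, Sum.elim_inr, Pi.add_apply,
        Finset.sum_apply, Pi.smul_apply, smul_eq_mul, Pi.zero_apply, Pi.single_apply,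
        mul_ite, mul_one, mul_zero] at hval
      have h2 : ∑ j : ↥T2, (if (l : Fin m) ∈ G ((j : ↥T2) : Fin (m / r))
          then cc (Sum.inr j) else 0) = 0 :=
        Finset.sum_eq_zero (fun j _ => by rw [hccT2 j, ite_self])
      have h1 : ∑ l' : ↥S, (if (l : Fin m) = ((l' : ↥S) : Fin m) then cc (Sum.inl l') else 0)
          = cc (Sum.inl l) := by
        rw [Finset.sum_eq_single l]
        · simp
        · intro l' _ hl'
          have hne : (l : Fin m) ≠ (l' : Fin m) := fun h => hl' (Subtype.ext h.symm)
          simp [hne]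
        · intro h
          exact absurd (Finset.mem_univ l) h
      rw [h1, h2, add_zero] at hval
      exact hval
    rintro (l | i)
    · exact hccS l
    · exact hccT2 i
  -- transfer independence along the linear combination map
  set φ : (Fin m → Fq) →ₗ[Fq] FqN := Fintype.linearCombination Fq g with hφ
  have hker : LinearMap.ker φ = ⊥ := by
    rw [LinearMap.ker_eq_bot']
    intro x hx
    rw [hφ, Fintype.linearCombination_apply] at hx
    funext l
    exact Fintype.linearIndependent_iff.mp hg x hx l
  have hφM : LinearIndependent Fq (⇑φ ∘ M) := hMind.map' φ hker
  have hφMeq : ∀ j, (⇑φ ∘ M) j = Sum.elim (fun l : ↥S => g (l : Fin m))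
      (fun i : ↥T2 => Pp (i : Fin (m / r))) j := by
    rintro (l | i)
    · simp only [Function.comp_apply, hM, Sum.elim_inl, hφ, Fintype.linearCombination_apply]
      simp [Pi.single_apply, ite_smul]
    · simp only [Function.comp_apply, hM, Sum.elim_inr, hφ, Fintype.linearCombination_apply,
        Sum.elim_inr, hPp]
      simp [ite_smul, Finset.sum_ite_mem]
  -- these vectors all lie in V
  have hw : LinearIndependent Fq (fun j : ↥S ⊕ ↥T2 =>
      (⟨Sum.elim (fun l : ↥S => g (l : Fin m)) (fun i : ↥T2 => Pp (i : Fin (m / r))) j, by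
        rcases j with l | i
        · exact (Finset.mem_filter.mp l.2).2
        · exact (Finset.mem_filter.mp (Finset.mem_filter.mp i.2).1).2⟩ : V)) := by
    apply LinearIndependent.of_comp V.subtype
    have : ⇑V.subtype ∘ (fun j : ↥S ⊕ ↥T2 =>
        (⟨Sum.elim (fun l : ↥S => g (l : Fin m)) (fun i : ↥T2 => Pp (i : Fin (m / r))) j, by
          rcases j with l | i
          · exact (Finset.mem_filter.mp l.2).2
          · exact (Finset.mem_filter.mp (Finset.mem_filter.mp i.2).1).2⟩ : V))
        = ⇑φ ∘ M := by
      funext j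
      exact (hφMeq j).symm
    rw [this]
    exact hφM
  have hcardle : S.card + T2.card ≤ k - 1 := by
    have h1 : Fintype.card (↥S ⊕ ↥T2) ≤ Module.finrank Fq V :=
      hw.fintype_card_le_finrank
    rw [Fintype.card_sum, Fintype.card_coe, Fintype.card_coe] at h1
    exact h1.trans hdimV
  -- the fully-zero groups
  have hT1le : T1.card * r ≤ S.card := by
    have hsub : T1.biUnion G ⊆ S := by
      intro x hx
      obtain ⟨i, hi, hxG⟩ := Finset.mem_biUnion.mp hx
      exact (Finset.mem_filter.mp hi).2 hxG
    have hbc : (T1.biUnion G).card = T1.card * r := by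
      rw [Finset.card_biUnion (fun i _ j _ hij => hdisj i j hij)]
      rw [Finset.sum_congr rfl (fun i _ => hGcard i), Finset.sum_const, smul_eq_mul]
    rw [← hbc]
    exact Finset.card_le_card hsub
  -- counting the zero coordinates
  subst hc
  have hzero : Nat.card {x : Fin m ⊕ Fin (m / r) //
      Sum.elim (fun l : Fin m => ∑ i : Fin k, a i * g l ^ q ^ (i : ℕ))
        (fun i' : Fin (m / r) => ∑ i : Fin k, a i * (∑ l ∈ G i', g l) ^ q ^ (i : ℕ)) x = 0}
      = S.card + T.card := by
    rw [Nat.card_congr (Equiv.subtypeSum), Nat.card_sum]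
    congr 1
    · rw [Nat.card_eq_fintype_card, ← Fintype.card_coe S]
      refine Fintype.card_congr (Equiv.subtypeEquivRight ?_)
      intro l
      simp [hS, hF]
    · rw [Nat.card_eq_fintype_card, ← Fintype.card_coe T]
      refine Fintype.card_congr (Equiv.subtypeEquivRight ?_)
      intro i
      simp [hT, hF, hPp]
  have hsplit : T1.card + T2.card = T.card := by
    rw [hT1, hT2]
    exact Finset.card_filter_add_card_filter_not _
  have hnonzero : Nat.card {x : Fin m ⊕ Fin (m / r) //
      Sum.elim (fun l : Fin m => ∑ i : Fin k, a i * g l ^ q ^ (i : ℕ))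
        (fun i' : Fin (m / r) => ∑ i : Fin k, a i * (∑ l ∈ G i', g l) ^ q ^ (i : ℕ)) x ≠ 0}
      = (m + m / r) - (S.card + T.card) := by
    rw [← hzero, Nat.card_eq_fintype_card, Nat.card_eq_fintype_card,
      Fintype.card_subtype_compl]
    congr 1
    simp
  -- arithmetic
  have hce1 : (k + r - 1) / r = (k - 1) / r + 1 := by
    rw [show k + r - 1 = (k - 1) + r by omega, Nat.add_div_right _ hr]
  have hT1le' : T1.card ≤ (k - 1) / r := by
    rw [Nat.le_div_iff_mul_le hr]
    exact hT1le.trans (by omega)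
  obtain ⟨mr, hmr⟩ := hrm
  have hmrr : m / r = mr := by rw [hmr, Nat.mul_div_cancel_left _ hr]
  have hce2 : (k - 1) / r < mr := by
    rw [Nat.div_lt_iff_lt_mul hr]
    calc k - 1 < m := by omega
    _ ≤ mr * r := by rw [hmr, mul_comm]
  constructor
  · rw [hzero]
    omega
  · rw [hnonzero]
    omega
end

section
/- Let q be a prime power, F_q ⊆ F_{q^N}, let r ≥ 2, let m ≡ k ≡ j (mod r) with 1 ≤ j < r and r < k ≤ m ≤ N, and let g_1, …, g_m ∈ F_{q^N} be linearly independent over F_q. Partition {1, …, m} into ⌊m/r⌋ groups G_1, …, G_{⌊m/r⌋} of size r and one group Ĝ of size j; for each group, let the parity point be the sum of its elements, and set n = m + ⌈m/r⌉. Then for every nonzero linearized polynomial f of q-degree at most k − 1, the codeword consisting of the values of f at the m evaluation points and the ⌈m/r⌉ parity points has Hamming weight at least n − k + 2 − ⌈k/r⌉. Hence in this case too the locally repairable code C^loc has minimum Hamming distance at least n − k + 2 − ⌈k/r⌉ and attains the locality bound d_min ≤ n − k + 2 − ⌈k/r⌉. -/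
/-- Minimum distance of the locally repairable code `C^loc`
(case `m ≡ k ≡ j (mod r)`, `1 ≤ j < r`). With `r ≥ 2`, `r < k ≤ m ≤ N`, `F_q`-linearly
independent evaluation points `g_1, …, g_m ∈ F_{q^N}`, a partition of `{1, …, m}` into
`⌊m/r⌋` groups `G_i` of size `r` and one group `Ĝ` of size `j`, and a parity point for each
group equal to the sum of its elements (so `n = m + ⌈m/r⌉` points in total), every codeword
of a nonzero linearized polynomial `f` of q-degree at most `k - 1` has Hamming weight at
least `n - k + 2 - ⌈k/r⌉`. Hence `C^loc` attains the locality bound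
`d_min ≤ n - k + 2 - ⌈k/r⌉`. (Here `⌈k/r⌉ = (k + r - 1) / r` and, since `r ∤ m`,
`⌈m/r⌉ = m/r + 1` in natural-number arithmetic.) -/
theorem locally_repairable_code_optimal_distance_remainder_case
    (q N m r k j : ℕ) (hq : ∃ p e : ℕ, p.Prime ∧ 0 < e ∧ q = p ^ e)
    (hr : 2 ≤ r) (hj1 : 1 ≤ j) (hjr : j < r) (hmj : m % r = j) (hkj : k % r = j)
    (hrk : r < k) (hkm : k ≤ m) (hmN : m ≤ N)
    (Fq FqN : Type) [Field Fq] [Field FqN] [Algebra Fq FqN]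
    [Fintype Fq] [Fintype FqN]
    (hcard : Fintype.card Fq = q) (hcardN : Fintype.card FqN = q ^ N)
    (g : Fin m → FqN) (hg : LinearIndependent Fq g)
    (G : Fin (m / r) → Finset (Fin m)) (Ghat : Finset (Fin m))
    (hGcard : ∀ i, (G i).card = r) (hGhatcard : Ghat.card = j)
    (hdisj : ∀ i i' : Fin (m / r), i ≠ i' → Disjoint (G i) (G i'))
    (hdisjhat : ∀ i : Fin (m / r), Disjoint (G i) Ghat)
    (hcover : Finset.univ.biUnion G ∪ Ghat = (Finset.univ : Finset (Fin m)))
    (a : Fin k → FqN) (ha : a ≠ 0)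
    (c : (Fin m ⊕ (Fin (m / r) ⊕ Unit)) → FqN)
    (hc : c = Sum.elim (fun l : Fin m => ∑ i : Fin k, a i * g l ^ q ^ (i : ℕ))
      (Sum.elim
        (fun i' : Fin (m / r) => ∑ i : Fin k, a i * (∑ l ∈ G i', g l) ^ q ^ (i : ℕ))
        (fun _ : Unit => ∑ i : Fin k, a i * (∑ l ∈ Ghat, g l) ^ q ^ (i : ℕ)))) :
    (m + (m / r + 1)) - k + 2 - (k + r - 1) / r ≤
      Nat.card {x : Fin m ⊕ (Fin (m / r) ⊕ Unit) // c x ≠ 0} := by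
  classical
  obtain ⟨p, e, hp, he, hqe⟩ := hq
  haveI : Fact p.Prime := ⟨hp⟩
  have hq2 : 2 ≤ q := by
    rw [hqe]; exact Nat.one_lt_pow (by omega) hp.one_lt
  -- characteristic of FqN is p
  obtain ⟨nn, hpn, hcardn⟩ := FiniteField.card FqN (ringChar FqN)
  have hpchar : p = ringChar FqN := by
    have hdvd : p ∣ Fintype.card FqN := by
      rw [hcardN, hqe, ← pow_mul]
      exact dvd_pow_self p (Nat.mul_ne_zero he.ne' (by omega))
    rw [hcardn] at hdvd
    exact (Nat.prime_dvd_prime_iff_eq hp hpn).mp (hp.dvd_of_dvd_pow hdvd)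
  haveI hchar : CharP FqN p := hpchar ▸ ringChar.charP FqN
  have hfadd : ∀ (x y : FqN) (t : ℕ), (x + y) ^ q ^ t = x ^ q ^ t + y ^ q ^ t := by
    intro x y t
    rw [hqe, ← pow_mul]
    exact add_pow_char_pow x y p (e * t)
  have hcfix : ∀ (cf : Fq) (t : ℕ), (algebraMap Fq FqN cf) ^ q ^ t = algebraMap Fq FqN cf := by
    intro cf t
    rw [← map_pow]
    congr 1
    rw [← hcard]
    exact FiniteField.pow_card_pow t cf
  -- the linearized polynomial as an Fq-linear map
  let φ : FqN →ₗ[Fq] FqN :=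
  { toFun := fun x => ∑ i : Fin k, a i * x ^ q ^ (i : ℕ)
    map_add' := by
      intro x y
      simp only [hfadd, mul_add]
      rw [Finset.sum_add_distrib]
    map_smul' := by
      intro cf x
      simp only [Algebra.smul_def, RingHom.id_apply, Finset.mul_sum]
      refine Finset.sum_congr rfl fun i _ => ?_
      rw [mul_pow, hcfix]
      ring }
  have hφ : ∀ x, φ x = ∑ i : Fin k, a i * x ^ q ^ (i : ℕ) := fun _ => rfl
  have hceq : ∀ x, c x = Sum.elim (fun l => φ (g l))
      (Sum.elim (fun i' => φ (∑ l ∈ G i', g l)) (fun _ => φ (∑ l ∈ Ghat, g l))) x := by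
    intro x; rw [hc]; rcases x with l | i | u <;> simp [hφ]
  -- the polynomial and its root bound
  let P : Polynomial FqN := ∑ i : Fin k, Polynomial.C (a i) * Polynomial.X ^ q ^ (i : ℕ)
  have hPeval : ∀ x, P.eval x = φ x := by
    intro x
    rw [Polynomial.eval_finset_sum]
    simp [hφ]
  have hPne : P ≠ 0 := by
    obtain ⟨i0, hi0⟩ : ∃ i, a i ≠ 0 := by
      by_contra h
      push_neg at h
      exact ha (funext h)
    intro h0
    have hcoeff : P.coeff (q ^ (i0 : ℕ)) = a i0 := by
      rw [Polynomial.finset_sum_coeff]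
      rw [Finset.sum_eq_single i0]
      · simp [Polynomial.coeff_C_mul, Polynomial.coeff_X_pow]
      · intro b _ hb
        simp only [Polynomial.coeff_C_mul, Polynomial.coeff_X_pow]
        rw [if_neg, mul_zero]
        intro hEq
        exact hb (Fin.ext (Nat.pow_right_injective hq2 hEq.symm))
      · intro h; exact absurd (Finset.mem_univ i0) h
    rw [h0, Polynomial.coeff_zero] at hcoeff
    exact hi0 hcoeff.symm
  have hPdeg : P.natDegree ≤ q ^ (k - 1) := by
    apply Polynomial.natDegree_sum_le_of_forall_le
    intro i _
    refine le_trans (Polynomial.natDegree_C_mul_X_pow_le _ _) ?_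
    exact Nat.pow_le_pow_right (by omega) (by omega)
  let RZ : Finset FqN := Finset.univ.filter fun x => φ x = 0
  have hRZ : RZ.card ≤ q ^ (k - 1) := by
    have hsub : RZ ⊆ P.roots.toFinset := by
      intro x hx
      simp only [RZ, Finset.mem_filter, Finset.mem_univ, true_and] at hx
      rw [Multiset.mem_toFinset, Polynomial.mem_roots hPne]
      rw [Polynomial.IsRoot, hPeval]
      exact hx
    calc RZ.card ≤ P.roots.toFinset.card := Finset.card_le_card hsub
      _ ≤ Multiset.card P.roots := Multiset.toFinset_card_le _
      _ ≤ P.natDegree := Polynomial.card_roots' P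
      _ ≤ q ^ (k - 1) := hPdeg
  -- the zero sets
  let S : Finset (Fin m) := Finset.univ.filter fun l => φ (g l) = 0
  let T0 : Finset (Fin (m / r)) := Finset.univ.filter fun i => φ (∑ l ∈ G i, g l) = 0
  let Tb : Finset (Fin (m / r)) := Finset.univ.filter fun i => G i ⊆ S
  let Tg := T0 \ Tb
  have hmemS : ∀ l, l ∈ S ↔ φ (g l) = 0 := by intro l; simp [S]
  have hTbsub : Tb ⊆ T0 := by
    intro i hi
    simp only [Tb, Finset.mem_filter, Finset.mem_univ, true_and] at hi
    simp only [T0, Finset.mem_filter, Finset.mem_univ, true_and]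
    rw [map_sum]
    exact Finset.sum_eq_zero fun l hl => (hmemS l).mp (hi hl)
  have hhatb_imp : Ghat ⊆ S → φ (∑ l ∈ Ghat, g l) = 0 := by
    intro h
    rw [map_sum]
    exact Finset.sum_eq_zero fun l hl => (hmemS l).mp (h hl)
  let embl : Fin m ↪ (Fin m ⊕ (Fin (m / r) ⊕ Unit)) := ⟨Sum.inl, Sum.inl_injective⟩
  let embr : Fin (m / r) ↪ (Fin m ⊕ (Fin (m / r) ⊕ Unit)) :=
    ⟨fun i => Sum.inr (Sum.inl i), by intro x y h; simpa using h⟩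
  have hembr : ∀ i, embr i = Sum.inr (Sum.inl i) := fun _ => rfl
  let pt : Fin m ⊕ (Fin (m / r) ⊕ Unit) := Sum.inr (Sum.inr ())
  let hatg : Prop := φ (∑ l ∈ Ghat, g l) = 0 ∧ ¬ Ghat ⊆ S
  let Z : Finset (Fin m ⊕ (Fin (m / r) ⊕ Unit)) :=
    S.map embl ∪ Tg.map embr ∪ (if hatg then {pt} else ∅)
  have hitemem : ∀ x : Fin m ⊕ (Fin (m / r) ⊕ Unit),
      (x ∈ (if hatg then ({pt} : Finset (Fin m ⊕ (Fin (m / r) ⊕ Unit))) else ∅))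
        ↔ hatg ∧ x = pt := by
    intro x
    split_ifs with h
    · exact ⟨fun hx => ⟨h, Finset.mem_singleton.mp hx⟩,
        fun hx => Finset.mem_singleton.mpr hx.2⟩
    · exact ⟨fun hx => absurd hx (Finset.notMem_empty x), fun hx => absurd hx.1 h⟩
  have hZmeml : ∀ l, Sum.inl l ∈ Z ↔ l ∈ S := by
    intro l
    rw [show Z = S.map embl ∪ Tg.map embr ∪ (if hatg then {pt} else ∅) from rfl]
    simp [hitemem, embl, embr, pt]
  have hZmemr : ∀ i, Sum.inr (Sum.inl i) ∈ Z ↔ i ∈ Tg := by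
    intro i
    rw [show Z = S.map embl ∪ Tg.map embr ∪ (if hatg then {pt} else ∅) from rfl]
    simp [hitemem, embl, hembr, pt]
  have hZmempt : pt ∈ Z ↔ hatg := by
    rw [show Z = S.map embl ∪ Tg.map embr ∪ (if hatg then {pt} else ∅) from rfl]
    simp [hitemem, embl, hembr, pt]
  let w : Fin m ⊕ (Fin (m / r) ⊕ Unit) → FqN :=
    Sum.elim g (Sum.elim (fun i => ∑ l ∈ G i, g l) (fun _ => ∑ l ∈ Ghat, g l))
  have hwZ : ∀ x ∈ Z, φ (w x) = 0 := by
    intro x hx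
    rcases x with l | i | u
    · have := (hZmeml l).mp hx
      simpa [w] using (hmemS l).mp this
    · have := (hZmemr i).mp hx
      have h2 := Finset.mem_sdiff.mp this
      have h3 := h2.1
      simp only [T0, Finset.mem_filter, Finset.mem_univ, true_and] at h3
      simpa [w] using h3
    · cases u
      have h2 := hZmempt.mp hx
      simpa [w] using h2.1
  -- key: coefficients of a vanishing combination over Z are zero
  have key : ∀ D : {x // x ∈ Z} → Fq, (∑ x : {x // x ∈ Z}, D x • w ↑x) = 0 → ∀ x, D x = 0 := by
    intro D hsum
    set Dx : (Fin m ⊕ (Fin (m / r) ⊕ Unit)) → Fq :=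
      fun x => if h : x ∈ Z then D ⟨x, h⟩ else 0 with hDxdef
    have hDcoe : ∀ (x) (h : x ∈ Z), Dx x = D ⟨x, h⟩ := fun x h => dif_pos h
    have hDnot : ∀ x, x ∉ Z → Dx x = 0 := fun x h => dif_neg h
    have hsumu : ∑ x : Fin m ⊕ (Fin (m / r) ⊕ Unit), Dx x • w x = 0 := by
      rw [← Finset.sum_subset (Finset.subset_univ Z)
        (fun x _ hx => by rw [hDnot x hx, zero_smul])]
      rw [← Finset.sum_coe_sort Z (fun x => Dx x • w x)]
      rw [← hsum]
      exact Finset.sum_congr rfl fun x _ => by rw [hDcoe x x.2]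
    set gc : Fin m → Fq := fun l => Dx (Sum.inl l)
      + (∑ i : Fin (m / r), if l ∈ G i then Dx (Sum.inr (Sum.inl i)) else 0)
      + (if l ∈ Ghat then Dx pt else 0) with hgcdef
    have hB : ∑ l : Fin m,
        (∑ i : Fin (m / r), if l ∈ G i then Dx (Sum.inr (Sum.inl i)) else 0) • g l
        = ∑ i : Fin (m / r), Dx (Sum.inr (Sum.inl i)) • ∑ l ∈ G i, g l := by
      simp only [Finset.sum_smul, ite_smul, zero_smul]
      rw [Finset.sum_comm]
      refine Finset.sum_congr rfl fun i _ => ?_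
      rw [Finset.smul_sum, ← Finset.sum_filter]
      congr 1
      ext l
      simp
    have hC : ∑ l : Fin m, (if l ∈ Ghat then Dx pt else 0) • g l
        = Dx pt • ∑ l ∈ Ghat, g l := by
      simp only [ite_smul, zero_smul]
      rw [Finset.smul_sum, ← Finset.sum_filter]
      congr 1
      ext l
      simp
    have htot : ∑ l : Fin m, gc l • g l = 0 := by
      have hexpand : ∑ l : Fin m, gc l • g l
          = ∑ x : Fin m ⊕ (Fin (m / r) ⊕ Unit), Dx x • w x := by
        rw [Fintype.sum_sum_type, Fintype.sum_sum_type]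
        have hunit : ∑ u : Unit, Dx (Sum.inr (Sum.inr u)) • w (Sum.inr (Sum.inr u))
            = Dx pt • ∑ l ∈ Ghat, g l := by
          simp [pt, w]
        simp only [hgcdef, add_smul, Finset.sum_add_distrib]
        rw [hB, hC, hunit, add_assoc]
        rfl
      rw [hexpand, hsumu]
    have hgc0 : ∀ l, gc l = 0 := Fintype.linearIndependent_iff.mp hg gc htot
    have hDr : ∀ i : Fin (m / r), Dx (Sum.inr (Sum.inl i)) = 0 := by
      intro i
      by_cases hiZ : Sum.inr (Sum.inl i) ∈ Z
      · have hiTg : i ∈ Tg := (hZmemr i).mp hiZ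
        have hnot : ¬ G i ⊆ S := by
          have := (Finset.mem_sdiff.mp hiTg).2
          simpa [Tb] using this
        obtain ⟨l0, hl0G, hl0S⟩ := Finset.not_subset.mp hnot
        have h0 := hgc0 l0
        simp only [hgcdef] at h0
        have h1 : Dx (Sum.inl l0) = 0 := hDnot _ (fun h => hl0S ((hZmeml l0).mp h))
        have h2 : (∑ i' : Fin (m / r), if l0 ∈ G i' then Dx (Sum.inr (Sum.inl i')) else 0)
            = Dx (Sum.inr (Sum.inl i)) := by
          rw [Finset.sum_eq_single i]
          · rw [if_pos hl0G]
          · intro b _ hb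
            rw [if_neg]
            intro hmem
            exact (Finset.disjoint_left.mp (hdisj b i hb) hmem) hl0G
          · intro h; exact absurd (Finset.mem_univ i) h
        have h3 : (if l0 ∈ Ghat then Dx pt else 0) = 0 := by
          rw [if_neg]
          exact Finset.disjoint_left.mp (hdisjhat i) hl0G
        rw [h1, h2, h3, zero_add, add_zero] at h0
        exact h0
      · exact hDnot _ hiZ
    have hDpt : Dx pt = 0 := by
      by_cases hptZ : pt ∈ Z
      · have hhg : hatg := hZmempt.mp hptZ
        obtain ⟨l0, hl0G, hl0S⟩ := Finset.not_subset.mp hhg.2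
        have h0 := hgc0 l0
        simp only [hgcdef] at h0
        have h1 : Dx (Sum.inl l0) = 0 := hDnot _ (fun h => hl0S ((hZmeml l0).mp h))
        have h2 : (∑ i' : Fin (m / r), if l0 ∈ G i' then Dx (Sum.inr (Sum.inl i')) else 0)
            = 0 := Finset.sum_eq_zero fun i' _ => by rw [hDr i']; simp
        have h3 : (if l0 ∈ Ghat then Dx pt else 0) = Dx pt := if_pos hl0G
        rw [h1, h2, h3, zero_add, zero_add] at h0
        exact h0
      · exact hDnot _ hptZ
    have hDl : ∀ l, Dx (Sum.inl l) = 0 := by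
      intro l
      have h0 := hgc0 l
      simp only [hgcdef] at h0
      have h2 : (∑ i' : Fin (m / r), if l ∈ G i' then Dx (Sum.inr (Sum.inl i')) else 0)
          = 0 := Finset.sum_eq_zero fun i' _ => by rw [hDr i']; simp
      have h3 : (if l ∈ Ghat then Dx pt else 0) = 0 := by rw [hDpt]; simp
      rw [h2, h3, add_zero, add_zero] at h0
      exact h0
    rintro ⟨x, hx⟩
    rw [← hDcoe x hx]
    rcases x with l | i | u
    · exact hDl l
    · exact hDr i
    · cases u; exact hDpt
  -- Claim A: |Z| ≤ k - 1
  have hmemRZ : ∀ D : {x // x ∈ Z} → Fq, (∑ x : {x // x ∈ Z}, D x • w ↑x) ∈ RZ := by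
    intro D
    simp only [RZ, Finset.mem_filter, Finset.mem_univ, true_and]
    rw [map_sum]
    exact Finset.sum_eq_zero fun x _ => by rw [map_smul, hwZ ↑x x.2, smul_zero]
  have hZcard : Z.card ≤ k - 1 := by
    have hinj : Function.Injective
        (fun D : ({x // x ∈ Z} → Fq) => (⟨_, hmemRZ D⟩ : {y // y ∈ RZ})) := by
      intro D1 D2 h12
      have hval : (∑ x : {x // x ∈ Z}, D1 x • w ↑x) = ∑ x : {x // x ∈ Z}, D2 x • w ↑x :=
        congrArg Subtype.val h12
      have h0 : ∑ x : {x // x ∈ Z}, (fun x => D1 x - D2 x) x • w ↑x = 0 := by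
        simp only [sub_smul]
        rw [Finset.sum_sub_distrib, hval, sub_self]
      funext x
      exact sub_eq_zero.mp (key _ h0 x)
    have hcard1 : Fintype.card ({x // x ∈ Z} → Fq) ≤ Fintype.card {y // y ∈ RZ} :=
      Fintype.card_le_of_injective _ hinj
    rw [Fintype.card_fun, Fintype.card_coe, Fintype.card_coe, hcard] at hcard1
    exact (Nat.pow_le_pow_iff_right (by omega)).mp (le_trans hcard1 hRZ)
  have hdisj1 : Disjoint (S.map embl) (Tg.map embr) := by
    rw [Finset.disjoint_left]
    intro x hx hy
    obtain ⟨l, _, rfl⟩ := Finset.mem_map.mp hx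
    obtain ⟨i, _, hi⟩ := Finset.mem_map.mp hy
    simp [embl, embr] at hi
  have hdisj2 : Disjoint (S.map embl ∪ Tg.map embr) (if hatg then {pt} else ∅) := by
    rw [Finset.disjoint_right]
    intro x hx hy
    split_ifs at hx with h
    · rw [Finset.mem_singleton] at hx
      subst hx
      rcases Finset.mem_union.mp hy with h' | h'
      · obtain ⟨l, _, hl⟩ := Finset.mem_map.mp h'
        simp [embl, pt] at hl
      · obtain ⟨i, _, hi⟩ := Finset.mem_map.mp h'
        simp [hembr, pt] at hi
    · exact absurd hx (Finset.notMem_empty x)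
  have hZval : Z.card = S.card + Tg.card + (if hatg then 1 else 0) := by
    rw [show Z = S.map embl ∪ Tg.map embr ∪ (if hatg then {pt} else ∅) from rfl]
    rw [Finset.card_union_of_disjoint hdisj2, Finset.card_union_of_disjoint hdisj1]
    rw [Finset.card_map, Finset.card_map]
    congr 1
    split_ifs <;> simp
  -- Claim B: r * |Tb| + (hatb) * j ≤ |S|
  have hBbound : r * Tb.card + (if Ghat ⊆ S then j else 0) ≤ S.card := by
    have hsubS : Tb.biUnion G ∪ (if Ghat ⊆ S then Ghat else ∅) ⊆ S := by
      intro l hl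
      rcases Finset.mem_union.mp hl with h | h
      · obtain ⟨i, hi, hli⟩ := Finset.mem_biUnion.mp h
        have : G i ⊆ S := by
          simpa [Tb] using hi
        exact this hli
      · split_ifs at h with hb
        · exact hb h
        · exact absurd h (Finset.notMem_empty l)
    have hdisjB : Disjoint (Tb.biUnion G) (if Ghat ⊆ S then Ghat else ∅) := by
      split_ifs
      · rw [Finset.disjoint_biUnion_left]
        exact fun i _ => hdisjhat i
      · exact Finset.disjoint_empty_right _
    have hcardu : (Tb.biUnion G ∪ (if Ghat ⊆ S then Ghat else ∅)).card
        = r * Tb.card + (if Ghat ⊆ S then j else 0) := by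
      rw [Finset.card_union_of_disjoint hdisjB]
      rw [Finset.card_biUnion (fun x _ y _ hxy => hdisj x y hxy)]
      congr 1
      · rw [Finset.sum_congr rfl (fun i _ => hGcard i), Finset.sum_const, smul_eq_mul,
          mul_comm]
      · split_ifs <;> simp [hGhatcard]
    rw [← hcardu]
    exact Finset.card_le_card hsubS
  -- arithmetic setup
  set kd := k / r with hkddef
  obtain ⟨B, hB'⟩ : ∃ B, B = r * kd := ⟨_, rfl⟩
  have hrkd : B + j = k := by
    rw [hB', hkddef, ← hkj]
    exact Nat.div_add_mod k r
  have hAfact : S.card + Tg.card + (if hatg then 1 else 0) ≤ k - 1 := hZval ▸ hZcard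
  have hSk : S.card ≤ k - 1 := by
    have := hAfact
    split_ifs at this <;> omega
  have hTbb : Tb.card + (if Ghat ⊆ S then 1 else 0) ≤ kd := by
    by_cases hb : Ghat ⊆ S
    · have h1 : r * Tb.card + j ≤ k - 1 := by
        have := le_trans hBbound hSk
        rwa [if_pos hb] at this
      have hmul : r * Tb.card + j ≤ B + j - 1 := by omega
      have hlt : r * Tb.card + j < B + j :=
        lt_of_le_of_lt hmul (Nat.sub_lt (by omega) one_pos)
      have hlt2 : r * Tb.card < B := Nat.lt_of_add_lt_add_right hlt
      rw [hB'] at hlt2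
      have := Nat.lt_of_mul_lt_mul_left hlt2
      rw [if_pos hb]
      omega
    · have h1 : r * Tb.card ≤ k - 1 := by
        have := le_trans hBbound hSk
        rwa [if_neg hb, add_zero] at this
      have hlt : r * Tb.card < r * (kd + 1) := by
        calc r * Tb.card ≤ k - 1 := h1
          _ < k := Nat.sub_lt (by omega) one_pos
          _ = B + j := hrkd.symm
          _ ≤ B + r := Nat.add_le_add_left hjr.le _
          _ = r * (kd + 1) := by rw [hB']; ring
      have := Nat.lt_of_mul_lt_mul_left hlt
      rw [if_neg hb, add_zero]
      omega
  -- the zero set of the codeword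
  let Z0 : Finset (Fin m ⊕ (Fin (m / r) ⊕ Unit)) := Finset.univ.filter fun x => c x = 0
  have hitemem2 : ∀ x : Fin m ⊕ (Fin (m / r) ⊕ Unit),
      (x ∈ (if φ (∑ l ∈ Ghat, g l) = 0
          then ({pt} : Finset (Fin m ⊕ (Fin (m / r) ⊕ Unit))) else ∅))
        ↔ φ (∑ l ∈ Ghat, g l) = 0 ∧ x = pt := by
    intro x
    split_ifs with h
    · exact ⟨fun hx => ⟨h, Finset.mem_singleton.mp hx⟩,
        fun hx => Finset.mem_singleton.mpr hx.2⟩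
    · exact ⟨fun hx => absurd hx (Finset.notMem_empty x), fun hx => absurd hx.1 h⟩
  have hZ0eq : Z0 = S.map embl ∪ T0.map embr
      ∪ (if φ (∑ l ∈ Ghat, g l) = 0 then {pt} else ∅) := by
    ext x
    rw [Finset.mem_union, Finset.mem_union, hitemem2 x]
    have hx0 : x ∈ Z0 ↔ c x = 0 := by simp [Z0]
    rw [hx0, hceq x]
    rcases x with l | i | u
    · simp [S, embl, embr, pt]
    · simp [T0, embl, hembr, pt]
    · cases u
      simp [embl, hembr, pt]
  have hdisj1' : Disjoint (S.map embl) (T0.map embr) := by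
    rw [Finset.disjoint_left]
    intro x hx hy
    obtain ⟨l, _, rfl⟩ := Finset.mem_map.mp hx
    obtain ⟨i, _, hi⟩ := Finset.mem_map.mp hy
    simp [embl, embr] at hi
  have hdisj2' : Disjoint (S.map embl ∪ T0.map embr)
      (if φ (∑ l ∈ Ghat, g l) = 0 then {pt} else ∅) := by
    rw [Finset.disjoint_right]
    intro x hx hy
    split_ifs at hx with h
    · rw [Finset.mem_singleton] at hx
      subst hx
      rcases Finset.mem_union.mp hy with h' | h'
      · obtain ⟨l, _, hl⟩ := Finset.mem_map.mp h'
        simp [embl, pt] at hl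
      · obtain ⟨i, _, hi⟩ := Finset.mem_map.mp h'
        simp [hembr, pt] at hi
    · exact absurd hx (Finset.notMem_empty x)
  have hZ0card : Z0.card = S.card + T0.card
      + (if φ (∑ l ∈ Ghat, g l) = 0 then 1 else 0) := by
    rw [hZ0eq, Finset.card_union_of_disjoint hdisj2', Finset.card_union_of_disjoint hdisj1']
    rw [Finset.card_map, Finset.card_map]
    congr 1
    split_ifs <;> simp
  have hT0split : Tg.card + Tb.card = T0.card := by
    have h1 : Tg.card = T0.card - Tb.card := Finset.card_sdiff_of_subset hTbsub
    have h2 : Tb.card ≤ T0.card := Finset.card_le_card hTbsub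
    omega
  have hbit : (if φ (∑ l ∈ Ghat, g l) = 0 then 1 else 0)
      = (if hatg then 1 else 0) + (if Ghat ⊆ S then 1 else 0) := by
    by_cases h1 : Ghat ⊆ S
    · rw [if_pos (hhatb_imp h1), if_neg (fun hh : hatg => hh.2 h1), if_pos h1]
    · by_cases h2 : φ (∑ l ∈ Ghat, g l) = 0
      · rw [if_pos h2, if_pos (show hatg from ⟨h2, h1⟩), if_neg h1]
      · rw [if_neg h2, if_neg (fun hh : hatg => h2 hh.1), if_neg h1]
  -- weight as complement count
  have hcardtot : Fintype.card (Fin m ⊕ (Fin (m / r) ⊕ Unit)) = m + (m / r + 1) := by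
    simp
  have hwt : Nat.card {x : Fin m ⊕ (Fin (m / r) ⊕ Unit) // c x ≠ 0}
      = (m + (m / r + 1)) - Z0.card := by
    rw [Nat.card_eq_fintype_card]
    have h1 : Fintype.card {x : Fin m ⊕ (Fin (m / r) ⊕ Unit) // c x = 0} = Z0.card := by
      rw [← Fintype.card_coe Z0]
      exact Fintype.card_congr (Equiv.subtypeEquivRight (by intro x; simp [Z0]))
    rw [Fintype.card_subtype_compl, h1, hcardtot]
  have hZ0le : Z0.card ≤ m + (m / r + 1) := by
    have h := Finset.card_le_univ Z0
    have h2 : (Finset.univ : Finset (Fin m ⊕ (Fin (m / r) ⊕ Unit))).card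
        = m + (m / r + 1) := by
      rw [Finset.card_univ, hcardtot]
    omega
  -- ceiling arithmetic
  have hfloor : (k - 1) / r = kd := by
    apply Nat.div_eq_of_lt_le
    · rw [mul_comm, ← hB']
      omega
    · have h2 : (kd + 1) * r = B + r := by rw [add_mul, one_mul, mul_comm kd r, ← hB']
      calc k - 1 < k := Nat.sub_lt (by omega) one_pos
        _ = B + j := hrkd.symm
        _ ≤ B + r := Nat.add_le_add_left hjr.le _
        _ = (kd + 1) * r := h2.symm
  have hceil : (k + r - 1) / r = kd + 1 := by
    have h1 : k + r - 1 = (k - 1) + r := by omega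
    rw [h1, Nat.add_div_right _ (by omega : 0 < r), hfloor]
  -- assemble
  rw [hwt, hceil]
  obtain ⟨bg, hbg⟩ : ∃ x, x = (if hatg then 1 else 0) := ⟨_, rfl⟩
  obtain ⟨bb, hbb⟩ : ∃ x, x = (if Ghat ⊆ S then 1 else 0) := ⟨_, rfl⟩
  rw [← hbg] at hAfact
  rw [← hbb] at hTbb
  have hbit' : (if φ (∑ l ∈ Ghat, g l) = 0 then 1 else 0) = bg + bb := by
    rw [hbit, ← hbg, ← hbb]
  rw [hbit'] at hZ0card
  have e1 : Z0.card ≤ (k - 1) + kd := by omega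
  have harith : ∀ n z kk dd : ℕ, 1 ≤ kk → kk ≤ n → z ≤ (kk - 1) + dd → z ≤ n →
      n - kk + 2 - (dd + 1) ≤ n - z := by
    intro n z kk dd h0 h00 h1 h2
    omega
  exact harith (m + (m / r + 1)) Z0.card k kd (by omega)
    (le_trans hkm (Nat.le_add_right m (m / r + 1))) e1 hZ0le
end
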